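/- arXiv:1102.2498 — 6 statements merged into one kernel-verified Lean document; each statement's English description precedes it below -/
import Mathlib

section
/- Let G be a two-unicast layered network and let P_11 (from s_1 to d_1) and P_22 (from s_2 to d_2) be disjoint paths. Fix i in {1,2} and suppose that, for the pair (P_11,P_22), at least two nodes cause interference on P_ii, i.e. n_i(G[V]) >= 2. Let v_p be the first node along P_ii such that every path from s_{i'} to d_i contains v_p (such a node exists since d_i itself has this property). Then there exist a path R from s_1 to v_p and a path R' from s_2 to v_p whose intersection is exactly {v_p}. -/
open List

/-- `IsPath E p u w` : the nonempty list `p` of vertices is a directed path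
from `u` to `w` with respect to the edge relation `E`. -/
def IsPath {V : Type*} (E : V → V → Prop) (p : List V) (u w : V) : Prop :=
  p ≠ [] ∧ p.head? = some u ∧ p.getLast? = some w ∧ p.Chain' E

/-- `Reaches E u w` (written `u ~> w`) : there is a directed path from `u` to `w`. -/
def Reaches {V : Type*} (E : V → V → Prop) (u w : V) : Prop :=
  ∃ p, IsPath E p u w

/-- A two-unicast layered network: a finite directed graph, with two sources
`s1, s2` and two destinations `d1, d2` (all four distinct), vertices partitioned
into layers `1, ..., r` such that every edge goes from a layer to the next one,
the first layer is `{s1, s2}`, the last layer is `{d1, d2}`, and each source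
reaches its corresponding destination. -/
structure TwoUnicastNetwork (V : Type*) [Fintype V] where
  E : V → V → Prop
  s1 : V
  s2 : V
  d1 : V
  d2 : V
  r : ℕ
  layer : V → ℕ
  layer_pos : ∀ v, 1 ≤ layer v
  layer_le : ∀ v, layer v ≤ r
  edge_layer : ∀ u w, E u w → layer w = layer u + 1
  s_ne : s1 ≠ s2
  d_ne : d1 ≠ d2
  sd_ne : ∀ s d, (s = s1 ∨ s = s2) → (d = d1 ∨ d = d2) → s ≠ d
  first_layer : ∀ v, layer v = 1 ↔ v = s1 ∨ v = s2
  last_layer : ∀ v, layer v = r ↔ v = d1 ∨ v = d2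
  conn1 : Reaches E s1 d1
  conn2 : Reaches E s2 d2

/-- `InterferesOn N S Ri srcOther v` : within the induced subgraph `G[S]`, the
node `v` causes interference on the path `Ri` : `v ∈ S`, `v ∉ Ri`, there is an
edge (inside `G[S]`) from `v` into a node of `Ri`, and there is a path from the
other source `srcOther` to `v` lying inside `G[S]` and disjoint from `Ri`. -/
def InterferesOn {V : Type*} [Fintype V] (N : TwoUnicastNetwork V) (S : Set V)
    (Ri : List V) (srcOther : V) (v : V) : Prop :=
  v ∈ S ∧ v ∉ Ri ∧ (∃ w ∈ Ri, w ∈ S ∧ N.E v w) ∧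
    ∃ q, IsPath N.E q srcOther v ∧ (∀ x ∈ q, x ∈ S) ∧ ∀ x ∈ q, x ∉ Ri

/-- `n_i(G[S])` : the number of nodes causing interference on `Ri` within the
induced subgraph `G[S]`, the interfering path coming from `srcOther`. -/
noncomputable def nInterf {V : Type*} [Fintype V] (N : TwoUnicastNetwork V)
    (S : Set V) (Ri : List V) (srcOther : V) : ℕ :=
  {v | InterferesOn N S Ri srcOther v}.ncard

/-- `n_i^D` : the number of nodes of the other path `Rother` causing (direct)
interference on `Ri` in `G`. -/
noncomputable def nDirect {V : Type*} [Fintype V] (N : TwoUnicastNetwork V)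
    (Ri Rother : List V) (srcOther : V) : ℕ :=
  {v | InterferesOn N Set.univ Ri srcOther v ∧ v ∈ Rother}.ncard

/-- The pair `(R1, R2)` (paths `s1 → d1` and `s2 → d2`) has manageable
interference: there is `S ⊇ R1 ∪ R2` with `n_1(G[S]) ≠ 1` and `n_2(G[S]) ≠ 1`. -/
def Manageable {V : Type*} [Fintype V] (N : TwoUnicastNetwork V)
    (R1 R2 : List V) : Prop :=
  ∃ S : Set V, (∀ x ∈ R1, x ∈ S) ∧ (∀ x ∈ R2, x ∈ S) ∧
    nInterf N S R1 N.s2 ≠ 1 ∧ nInterf N S R2 N.s1 ≠ 1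

/-- The pair `(R1, R2)` has `(s1,d1)`-manageable interference. -/
def Manageable1 {V : Type*} [Fintype V] (N : TwoUnicastNetwork V)
    (R1 R2 : List V) : Prop :=
  ∃ S : Set V, (∀ x ∈ R1, x ∈ S) ∧ (∀ x ∈ R2, x ∈ S) ∧ nInterf N S R1 N.s2 ≠ 1

/-- The pair `(R1, R2)` has `(s2,d2)`-manageable interference. -/
def Manageable2 {V : Type*} [Fintype V] (N : TwoUnicastNetwork V)
    (R1 R2 : List V) : Prop :=
  ∃ S : Set V, (∀ x ∈ R1, x ∈ S) ∧ (∀ x ∈ R2, x ∈ S) ∧ nInterf N S R2 N.s1 ≠ 1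

/-- Removal of the vertex `v` disconnects `a` from `b` :
every path from `a` to `b` contains `v`. -/
def CutVert {V : Type*} [Fintype V] (N : TwoUnicastNetwork V) (v a b : V) : Prop :=
  ∀ p, IsPath N.E p a b → v ∈ p


/- ### Auxiliary machinery for the proof -/

section PathMachinery
variable {V : Type*}

namespace IsPath
variable {E : V → V → Prop} {p : List V} {u w : V}

lemma len_pos (h : IsPath E p u w) : 0 < p.length := List.length_pos_iff.mpr h.1

lemma get0 (h : IsPath E p u w) : p[0]'h.len_pos = u := by
  have h2 := h.2.1
  rw [List.head?_eq_head h.1] at h2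
  rw [List.getElem_zero h.len_pos]
  exact Option.some.inj h2

lemma getLastElem (h : IsPath E p u w) :
    p[p.length - 1]'(by have := h.len_pos; omega) = w := by
  have h2 := h.2.2.1
  rw [List.getLast?_eq_getLast h.1, List.getLast_eq_getElem] at h2
  exact Option.some.inj h2

lemma edge (h : IsPath E p u w) (j : ℕ) (hj : j + 1 < p.length) :
    E (p[j]'(by omega)) (p[j+1]'hj) := by
  have := List.isChain_iff_getElem.mp h.2.2.2 j (by omega)
  simpa using this

end IsPath

lemma isPath_mk {E : V → V → Prop} {p : List V} {u w : V} (hlen : 0 < p.length)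
    (h0 : p[0]'hlen = u) (hl : p[p.length - 1]'(by omega) = w)
    (he : ∀ j, (hj : j + 1 < p.length) → E (p[j]'(by omega)) (p[j+1]'hj)) :
    IsPath E p u w := by
  have hne : p ≠ [] := List.length_pos_iff.mp hlen
  refine ⟨hne, ?_, ?_, ?_⟩
  · rw [List.head?_eq_head hne, ← List.getElem_zero hlen, h0]
  · rw [List.getLast?_eq_getLast hne, List.getLast_eq_getElem, hl]
  · refine List.isChain_iff_getElem.mpr ?_
    intro i hi
    simpa using he i (by omega)

/-- function-style path of length `L` (vertices `f 0, ..., f (L-1)`). -/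
def FPath (E : V → V → Prop) (L : ℕ) (f : ℕ → V) (a t : V) : Prop :=
  f 0 = a ∧ f (L - 1) = t ∧ ∀ j, j + 1 < L → E (f j) (f (j + 1))

lemma fpath_ofIsPath {E : V → V → Prop} {p : List V} {u w : V}
    (h : IsPath E p u w) : FPath E p.length (fun j => p.getD j u) u w := by
  have hlen := h.len_pos
  refine ⟨?_, ?_, ?_⟩
  · show p.getD 0 u = u
    rw [List.getD_eq_getElem p u hlen]; exact h.get0
  · show p.getD (p.length - 1) u = w
    rw [List.getD_eq_getElem p u (show p.length - 1 < p.length by omega)]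
    exact h.getLastElem
  · intro j hj
    show E (p.getD j u) (p.getD (j+1) u)
    rw [List.getD_eq_getElem p u (show j < p.length by omega), List.getD_eq_getElem p u hj]
    exact h.edge j hj

lemma isPath_ofFPath {E : V → V → Prop} {L : ℕ} {f : ℕ → V} {a t : V}
    (hL : 0 < L) (h : FPath E L f a t) : IsPath E ((List.range L).map f) a t := by
  have hlen : ((List.range L).map f).length = L := by simp
  refine isPath_mk (by omega) ?_ ?_ ?_
  · simpa using h.1
  · simp only [List.getElem_map, List.getElem_range, hlen]
    exact h.2.1
  · intro j hj
    rw [hlen] at hj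
    simp only [List.getElem_map, List.getElem_range]
    exact h.2.2 j hj

lemma mem_rangeMap {L : ℕ} {f : ℕ → V} {x : V} :
    x ∈ (List.range L).map f ↔ ∃ j < L, f j = x := by
  simp [List.mem_map]

/-- truncation: a path up to its `j`-th vertex. -/
lemma FPath.trunc {E : V → V → Prop} {L : ℕ} {f : ℕ → V} {a t : V}
    (h : FPath E L f a t) {j : ℕ} (hj : j < L) :
    FPath E (j + 1) f a (f j) :=
  ⟨h.1, by simp, fun i hi => h.2.2 i (by omega)⟩

/-- shift: the path from the `j`-th vertex on. -/
lemma FPath.shift {E : V → V → Prop} {L : ℕ} {f : ℕ → V} {a t : V}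
    (h : FPath E L f a t) {j : ℕ} (hj : j < L) :
    FPath E (L - j) (fun i => f (j + i)) (f j) t := by
  refine ⟨by simp, ?_, fun i hi => ?_⟩
  · show f (j + (L - j - 1)) = t
    rw [show j + (L - j - 1) = L - 1 by omega]; exact h.2.1
  · show E (f (j + i)) (f (j + (i + 1)))
    rw [show j + (i+1) = (j+i) + 1 by omega]
    exact h.2.2 _ (by omega)

/-- concatenation through an edge. -/
lemma FPath.append {E : V → V → Prop} {L L' : ℕ} {f g : ℕ → V} {a b c t : V}
    (h : FPath E L f a b) (hg : FPath E L' g c t) (hL : 0 < L) (hL' : 0 < L')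
    (e : E b c) :
    FPath E (L + L') (fun i => if i < L then f i else g (i - L)) a t := by
  refine ⟨by simpa [hL] using h.1, ?_, fun i hi => ?_⟩
  · show (if L + L' - 1 < L then f (L + L' - 1) else g (L + L' - 1 - L)) = t
    rw [if_neg (by omega), show L + L' - 1 - L = L' - 1 by omega]; exact hg.2.1
  · by_cases h1 : i + 1 < L
    · simp only [if_pos h1, if_pos (show i < L by omega)]
      exact h.2.2 i h1
    · by_cases h2 : i < L
      · simp only [if_pos h2, if_neg h1]
        rw [show i + 1 - L = 0 by omega, hg.1, show f i = b from ?_]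
        · exact e
        · rw [show i = L - 1 by omega]; exact h.2.1
      · simp only [if_neg h1, if_neg h2]
        rw [show i + 1 - L = (i - L) + 1 by omega]
        exact hg.2.2 _ (by omega)

lemma FPath.layer {E : V → V → Prop} {L : ℕ} {a t : V} {ℓ : V → ℕ} {f : ℕ → V}
    (hℓ : ∀ u w, E u w → ℓ w = ℓ u + 1)
    (h : FPath E L f a t) : ∀ j, j < L → ℓ (f j) = ℓ a + j := by
  intro j
  induction j with
  | zero => intro _; simp [h.1]
  | succ n ih =>
    intro hn
    rw [hℓ _ _ (h.2.2 n hn), ih (by omega)]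
    omega

/-- Key rerouting step: if `P, Q` collide at a top layer `m` at a non-cut vertex
(witnessed by the avoiding path `P'` from `a`), then the collision can be pushed
strictly below `m`. -/
lemma descent {E : V → V → Prop} {L : ℕ} {P Q P' : ℕ → V} {a b t : V}
    (hP : FPath E L P a t) (hQ : FPath E L Q b t)
    (m : ℕ) (hmL : m + 1 < L) (hcol : P m = Q m)
    (hmax : ∀ j, j + 1 < L → P j = Q j → j ≤ m)
    (hP' : FPath E L P' a t) (havoid : ∀ j, j < L → P' j ≠ P m) :
    ∃ P₁ Q₁, FPath E L P₁ a t ∧ FPath E L Q₁ b t ∧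
      ∀ j, j + 1 < L → P₁ j = Q₁ j → j < m := by
  classical
  have hm1 : 1 ≤ m := by
    by_contra hm
    have hm0 : m = 0 := by omega
    exact havoid 0 (by omega) (by rw [hP'.1, ← hP.1, ← hm0])
  have hex : ∃ j, m < j ∧ j < L ∧ (P' j = P j ∨ P' j = Q j) :=
    ⟨L - 1, by omega, by omega, Or.inl (by rw [hP'.2.1, hP.2.1])⟩
  obtain ⟨k, ⟨hk1, hk2, hk3⟩, hkmin0⟩ :
      ∃ k, (m < k ∧ k < L ∧ (P' k = P k ∨ P' k = Q k)) ∧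
        ∀ j < k, ¬ (m < j ∧ j < L ∧ (P' j = P j ∨ P' j = Q j)) :=
    ⟨Nat.find hex, Nat.find_spec hex, fun j hj => Nat.find_min hex hj⟩
  have hkmin : ∀ j, m < j → j < k → j < L → P' j ≠ P j ∧ P' j ≠ Q j := by
    intro j hj1 hj2 hj3
    have := hkmin0 j hj2
    push_neg at this
    exact this hj1 hj3
  rcases hk3 with hPk | hQk
  · -- splice P' with P at k
    refine ⟨fun j => if j < k then P' j else P j, Q, ⟨?_, ?_, ?_⟩, hQ, ?_⟩
    · simp only [if_pos (show 0 < k by omega)]; exact hP'.1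
    · simp only [if_neg (show ¬ (L - 1 < k) by omega)]; exact hP.2.1
    · intro j hj
      by_cases h1 : j + 1 < k
      · simp only [if_pos h1, if_pos (show j < k by omega)]
        exact hP'.2.2 j (by omega)
      · by_cases h2 : j < k
        · have : j + 1 = k := by omega
          simp only [if_pos h2, if_neg h1]
          rw [← this] at hPk
          rw [← hPk]
          exact hP'.2.2 j (by omega)
        · simp only [if_neg h1, if_neg h2]
          exact hP.2.2 j hj
    · intro j hj heq
      by_contra hjm
      push_neg at hjm
      by_cases h2 : j < k
      · rcases Nat.lt_or_ge m j with hmj | hmj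
        · exact (hkmin j hmj h2 (by omega)).2 (by simpa [if_pos h2] using heq)
        · have hjm' : j = m := by omega
          subst hjm'
          exact havoid j (by omega) (by rw [hcol]; simpa [if_pos h2] using heq)
      · simp only [if_neg h2] at heq
        have := hmax j hj heq
        omega
  · -- splice P' with Q at k, and reroute Q through P after m
    refine ⟨fun j => if j < k then P' j else Q j,
            fun j => if j < m then Q j else P j, ⟨?_, ?_, ?_⟩, ⟨?_, ?_, ?_⟩, ?_⟩
    · simp only [if_pos (show 0 < k by omega)]; exact hP'.1
    · simp only [if_neg (show ¬ (L - 1 < k) by omega)]; exact hQ.2.1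
    · intro j hj
      by_cases h1 : j + 1 < k
      · simp only [if_pos h1, if_pos (show j < k by omega)]
        exact hP'.2.2 j (by omega)
      · by_cases h2 : j < k
        · have : j + 1 = k := by omega
          simp only [if_pos h2, if_neg h1]
          rw [← this] at hQk
          rw [← hQk]
          exact hP'.2.2 j (by omega)
        · simp only [if_neg h1, if_neg h2]
          exact hQ.2.2 j hj
    · simp only [if_pos (show 0 < m by omega)]; exact hQ.1
    · simp only [if_neg (show ¬ (L - 1 < m) by omega)]; exact hP.2.1
    · intro j hj
      by_cases h1 : j + 1 < m
      · simp only [if_pos h1, if_pos (show j < m by omega)]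
        exact hQ.2.2 j (by omega)
      · by_cases h2 : j < m
        · have hjm : j + 1 = m := by omega
          simp only [if_pos h2, if_neg h1]
          rw [← hjm] at hcol
          rw [hcol]
          exact hQ.2.2 j (by omega)
        · simp only [if_neg h1, if_neg h2]
          exact hP.2.2 j hj
    · intro j hj heq
      by_contra hjm
      push_neg at hjm
      have hnotm : ¬ (j < m) := by omega
      simp only [if_neg hnotm] at heq
      by_cases h2 : j < k
      · rcases Nat.lt_or_ge m j with hmj | hmj
        · exact (hkmin j hmj h2 (by omega)).1 (by simpa [if_pos h2] using heq)
        · have hjm' : j = m := by omega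
          subst hjm'
          exact havoid j (by omega) (by simpa [if_pos h2] using heq)
      · simp only [if_neg h2] at heq
        have := hmax j hj heq.symm
        omega

end PathMachinery

section Menger
variable {V : Type*} [Fintype V]

/-- Menger-type induction: push the top collision layer down to nothing. -/
lemma menger_fpath (N : TwoUnicastNetwork V) {a b t : V}
    (ha : N.layer a = 1)
    (hcut : ∀ x, x ≠ t →
      (∃ f, FPath N.E (N.layer t) f a t ∧ ∀ j < N.layer t, f j ≠ x) ∨
      (∃ g, FPath N.E (N.layer t) g b t ∧ ∀ j < N.layer t, g j ≠ x)) :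
    ∀ n (P Q : ℕ → V), FPath N.E (N.layer t) P a t → FPath N.E (N.layer t) Q b t →
      (∀ j, j + 1 < N.layer t → P j = Q j → j < n) →
      ∃ P₁ Q₁, FPath N.E (N.layer t) P₁ a t ∧ FPath N.E (N.layer t) Q₁ b t ∧
        ∀ j, j + 1 < N.layer t → P₁ j ≠ Q₁ j := by
  intro n
  induction n with
  | zero =>
    intro P Q hP hQ hbound
    exact ⟨P, Q, hP, hQ, fun j hj heq => absurd (hbound j hj heq) (by omega)⟩
  | succ n ih =>
    intro P Q hP hQ hbound
    by_cases hc : n + 1 < N.layer t ∧ P n = Q n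
    · obtain ⟨hn1, hcol⟩ := hc
      have hLpos : 0 < N.layer t := N.layer_pos t
      have hlt : N.layer t = 1 + (N.layer t - 1) := by omega
      have hxt : P n ≠ t := by
        have h1 : N.layer (P n) = 1 + n := by
          have := FPath.layer N.edge_layer hP n (by omega)
          rw [ha] at this; exact this
        intro hEq
        rw [hEq] at h1
        omega
      rcases hcut (P n) hxt with ⟨P', hP', hav⟩ | ⟨Q', hQ', hav⟩
      · obtain ⟨P₁, Q₁, h1, h2, h3⟩ :=
          descent hP hQ n hn1 hcol
            (fun j hj heq => by have := hbound j hj heq; omega) hP' hav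
        exact ih P₁ Q₁ h1 h2 h3
      · obtain ⟨Q₁, P₁, h1, h2, h3⟩ :=
          descent hQ hP n hn1 hcol.symm
            (fun j hj heq => by have := hbound j hj heq.symm; omega) hQ'
            (fun j hj => by rw [← hcol]; exact hav j hj)
        exact ih P₁ Q₁ h2 h1 (fun j hj heq => h3 j hj heq.symm)
    · apply ih P Q hP hQ
      intro j hj heq
      have := hbound j hj heq
      rcases Nat.lt_or_ge j n with h | h
      · exact h
      · exfalso
        have hjn : j = n := by omega
        subst hjn
        exact hc ⟨hj, heq⟩

/-- List-level two-path Menger lemma for the layered network. -/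
lemma menger_list (N : TwoUnicastNetwork V) {a b t : V}
    (ha : N.layer a = 1) (hb : N.layer b = 1)
    (hra : Reaches N.E a t) (hrb : Reaches N.E b t)
    (hcut : ∀ u, u ≠ t → (∀ p, IsPath N.E p a t → u ∈ p) →
      (∀ q, IsPath N.E q b t → u ∈ q) → False) :
    ∃ P Q, IsPath N.E P a t ∧ IsPath N.E Q b t ∧ ∀ x, (x ∈ P ∧ x ∈ Q) ↔ x = t := by
  classical
  have hL : 0 < N.layer t := N.layer_pos t
  have hlen : ∀ (s : V) (p : List V), N.layer s = 1 → IsPath N.E p s t →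
      p.length = N.layer t := by
    intro s p hs hp
    have hf := fpath_ofIsPath hp
    have h2 := FPath.layer N.edge_layer hf (p.length - 1) (by have := hp.len_pos; omega)
    have h3 : p.getD (p.length - 1) s = t := hf.2.1
    rw [h3, hs] at h2
    have := hp.len_pos
    omega
  obtain ⟨p0, hp0⟩ := hra
  obtain ⟨q0, hq0⟩ := hrb
  have hP0 : FPath N.E (N.layer t) (fun j => p0.getD j a) a t := by
    have := fpath_ofIsPath hp0
    rwa [hlen a p0 ha hp0] at this
  have hQ0 : FPath N.E (N.layer t) (fun j => q0.getD j b) b t := by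
    have := fpath_ofIsPath hq0
    rwa [hlen b q0 hb hq0] at this
  have hcut' : ∀ x, x ≠ t →
      (∃ f, FPath N.E (N.layer t) f a t ∧ ∀ j < N.layer t, f j ≠ x) ∨
      (∃ g, FPath N.E (N.layer t) g b t ∧ ∀ j < N.layer t, g j ≠ x) := by
    intro x hxt
    by_contra hcon
    push_neg at hcon
    obtain ⟨hca, hcb⟩ := hcon
    refine hcut x hxt ?_ ?_
    · intro p hp
      have hf : FPath N.E (N.layer t) (fun j => p.getD j a) a t := by
        have := fpath_ofIsPath hp
        rwa [hlen a p ha hp] at this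
      obtain ⟨j, hj, hje⟩ := hca _ hf
      have hjl : j < p.length := by rw [hlen a p ha hp]; exact hj
      rw [List.getD_eq_getElem p a hjl] at hje
      rw [← hje]
      exact List.getElem_mem hjl
    · intro q hq
      have hf : FPath N.E (N.layer t) (fun j => q.getD j b) b t := by
        have := fpath_ofIsPath hq
        rwa [hlen b q hb hq] at this
      obtain ⟨j, hj, hje⟩ := hcb _ hf
      have hjl : j < q.length := by rw [hlen b q hb hq]; exact hj
      rw [List.getD_eq_getElem q b hjl] at hje
      rw [← hje]
      exact List.getElem_mem hjl
  obtain ⟨P₁, Q₁, h1, h2, h3⟩ :=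
    menger_fpath N ha hcut' (N.layer t) _ _ hP0 hQ0 (fun j hj _ => by omega)
  refine ⟨(List.range (N.layer t)).map P₁, (List.range (N.layer t)).map Q₁,
    isPath_ofFPath hL h1, isPath_ofFPath hL h2, ?_⟩
  intro x
  constructor
  · rintro ⟨hx1, hx2⟩
    rw [mem_rangeMap] at hx1 hx2
    obtain ⟨j, hj, hje⟩ := hx1
    obtain ⟨j', hj', hje'⟩ := hx2
    have l1 : N.layer x = 1 + j := by
      rw [← hje]
      have := FPath.layer N.edge_layer h1 j hj
      rw [ha] at this; exact this
    have l2 : N.layer x = 1 + j' := by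
      rw [← hje']
      have := FPath.layer N.edge_layer h2 j' hj'
      rw [hb] at this; exact this
    have hjj : j = j' := by omega
    subst hjj
    by_cases hjL : j + 1 < N.layer t
    · exact absurd (hje.trans hje'.symm) (h3 j hjL)
    · have hjeq : j = N.layer t - 1 := by omega
      subst hjeq
      rw [← hje]
      exact h1.2.1
  · intro hx
    refine ⟨?_, ?_⟩ <;> rw [mem_rangeMap]
    · exact ⟨N.layer t - 1, by omega, by rw [h1.2.1]; exact hx.symm⟩
    · exact ⟨N.layer t - 1, by omega, by rw [h2.2.1]; exact hx.symm⟩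

/-- Application lemma: `vp` satisfies the hypotheses needed for the Menger lemma. -/
lemma core [DecidableEq V] (N : TwoUnicastNetwork V)
    (si di soi : V) (Pii : List V)
    (hsi : N.layer si = 1)
    (hPii : IsPath N.E Pii si di)
    (hv : ∃ v, InterferesOn N Set.univ Pii soi v)
    (vp : V) (hvpPii : vp ∈ Pii)
    (hvpcut : ∀ p, IsPath N.E p soi di → vp ∈ p)
    (hvpfirst : ∀ u ∈ Pii, (∀ p, IsPath N.E p soi di → u ∈ p) →
      Pii.idxOf vp ≤ Pii.idxOf u) :
    Reaches N.E si vp ∧ Reaches N.E soi vp ∧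
      ∀ u, u ≠ vp → (∀ p, IsPath N.E p si vp → u ∈ p) →
        (∀ q, IsPath N.E q soi vp → u ∈ q) → False := by
  classical
  have hfPii : FPath N.E Pii.length (fun j => Pii.getD j si) si di := fpath_ofIsPath hPii
  have hgetP : ∀ j, (hj : j < Pii.length) → Pii.getD j si = Pii[j] :=
    fun j hj => List.getD_eq_getElem _ _ hj
  have hlayP : ∀ j, j < Pii.length → N.layer (Pii.getD j si) = 1 + j := by
    intro j hj
    have := FPath.layer N.edge_layer hfPii j hj
    rw [hsi] at this; exact this
  obtain ⟨jp, hjp, hjpe⟩ := List.mem_iff_getElem.mp hvpPii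
  have hfjp : Pii.getD jp si = vp := by rw [hgetP jp hjp, hjpe]
  have hPref : FPath N.E (jp + 1) (fun j => Pii.getD j si) si vp := by
    have := hfPii.trunc hjp
    rwa [hfjp] at this
  have hReachSi : Reaches N.E si vp := ⟨_, isPath_ofFPath (by omega) hPref⟩
  -- build a path soi → di using an interfering node
  obtain ⟨v, -, hvnotP, ⟨w, hwP, -, hEvw⟩, q, hq, -, -⟩ := hv
  obtain ⟨jw, hjw, hjwe⟩ := List.mem_iff_getElem.mp hwP
  have hfq : FPath N.E q.length (fun j => q.getD j soi) soi v := fpath_ofIsPath hq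
  have hdropw : FPath N.E (Pii.length - jw) (fun i => Pii.getD (jw + i) si) w di := by
    have := hfPii.shift hjw
    rwa [show (fun i => Pii.getD (jw + i) si) = fun i => (fun j => Pii.getD j si) (jw + i)
      from rfl, hgetP jw hjw, hjwe] at this
  have hT := hfq.append hdropw hq.len_pos (by omega) hEvw
  have hTlen : 0 < q.length + (Pii.length - jw) := by have := hq.len_pos; omega
  have hTlist := isPath_ofFPath hTlen hT
  have hvpT := hvpcut _ hTlist
  rw [mem_rangeMap] at hvpT
  obtain ⟨j₀, hj₀, hj₀e⟩ := hvpT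
  have hTpref := hT.trunc hj₀
  rw [hj₀e] at hTpref
  have hReachSoi : Reaches N.E soi vp := ⟨_, isPath_ofFPath (by omega) hTpref⟩
  refine ⟨hReachSi, hReachSoi, ?_⟩
  intro u hu h1 h2
  have hmem := h1 _ (isPath_ofFPath (by omega) hPref)
  rw [mem_rangeMap] at hmem
  obtain ⟨j, hj, hje⟩ := hmem
  have hjne : j ≠ jp := fun h => hu (by rw [← hje, h, hfjp])
  have hjlt : j < jp := by omega
  have hjPl : j < Pii.length := by omega
  have huPii : u ∈ Pii := by
    rw [← hje, hgetP j hjPl]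
    exact List.getElem_mem hjPl
  have hall : ∀ p, IsPath N.E p soi di → u ∈ p := by
    intro p hp
    have hfp : FPath N.E p.length (fun i => p.getD i soi) soi di := fpath_ofIsPath hp
    obtain ⟨j₁, hj₁, hj₁e⟩ := List.mem_iff_getElem.mp (hvpcut p hp)
    have hg : p.getD j₁ soi = vp := by rw [List.getD_eq_getElem p soi hj₁, hj₁e]
    have hppref : FPath N.E (j₁ + 1) (fun i => p.getD i soi) soi vp := by
      have := hfp.trunc hj₁
      rwa [hg] at this
    have hmem2 := h2 _ (isPath_ofFPath (by omega) hppref)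
    rw [mem_rangeMap] at hmem2
    obtain ⟨j₂, hj₂, hj₂e⟩ := hmem2
    have hj₂l : j₂ < p.length := by omega
    rw [List.getD_eq_getElem p soi hj₂l] at hj₂e
    rw [← hj₂e]
    exact List.getElem_mem hj₂l
  have hidx := hvpfirst u huPii hall
  have hui : Pii.idxOf u < Pii.length := List.idxOf_lt_length_iff.mpr huPii
  have hvi : Pii.idxOf vp < Pii.length := List.idxOf_lt_length_iff.mpr hvpPii
  have e1 : N.layer u = 1 + Pii.idxOf u := by
    have h' := hlayP _ hui
    rw [hgetP _ hui, List.getElem_idxOf hui] at h'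
    exact h'
  have e2 : N.layer u = 1 + j := by rw [← hje]; exact hlayP j hjPl
  have e3 : N.layer vp = 1 + Pii.idxOf vp := by
    have h' := hlayP _ hvi
    rw [hgetP _ hvi, List.getElem_idxOf hvi] at h'
    exact h'
  have e4 : N.layer vp = 1 + jp := by rw [← hfjp]; exact hlayP jp hjp
  omega

end Menger

theorem statement0 {V : Type*} [Fintype V] [DecidableEq V]
    (N : TwoUnicastNetwork V) (P11 P22 : List V)
    (hP11 : IsPath N.E P11 N.s1 N.d1)
    (hP22 : IsPath N.E P22 N.s2 N.d2)
    (hdisj : P11.Disjoint P22)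
    (si di soi : V) (Pii : List V)
    (hi : (si = N.s1 ∧ di = N.d1 ∧ soi = N.s2 ∧ Pii = P11) ∨
          (si = N.s2 ∧ di = N.d2 ∧ soi = N.s1 ∧ Pii = P22))
    (hn : 2 ≤ nInterf N Set.univ Pii soi)
    (vp : V)
    (hvpPii : vp ∈ Pii)
    (hvpcut : ∀ p : List V, IsPath N.E p soi di → vp ∈ p)
    (hvpfirst : ∀ u ∈ Pii, (∀ p : List V, IsPath N.E p soi di → u ∈ p) →
      Pii.idxOf vp ≤ Pii.idxOf u) :
    ∃ R R' : List V, IsPath N.E R N.s1 vp ∧ IsPath N.E R' N.s2 vp ∧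
      ∀ x : V, (x ∈ R ∧ x ∈ R') ↔ x = vp := by
  have hs1 : N.layer N.s1 = 1 := (N.first_layer N.s1).mpr (Or.inl rfl)
  have hs2 : N.layer N.s2 = 1 := (N.first_layer N.s2).mpr (Or.inr rfl)
  have hv : ∃ v, InterferesOn N Set.univ Pii soi v := by
    by_contra h
    push_neg at h
    have hempty : {v | InterferesOn N Set.univ Pii soi v} = ∅ :=
      Set.eq_empty_iff_forall_notMem.mpr h
    rw [nInterf, hempty] at hn
    simp at hn
  rcases hi with ⟨rfl, rfl, rfl, rfl⟩ | ⟨rfl, rfl, rfl, rfl⟩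
  · obtain ⟨r1, r2, hcut⟩ := core N _ _ _ _ hs1 hP11 hv vp hvpPii hvpcut hvpfirst
    exact menger_list N hs1 hs2 r1 r2 hcut
  · obtain ⟨r2, r1, hcut⟩ := core N _ _ _ _ hs2 hP22 hv vp hvpPii hvpcut hvpfirst
    exact menger_list N hs1 hs2 r1 r2 (fun u hu hp hq => hcut u hu hq hp)
end

section
/- Let G be a two-unicast layered network and let P_11 (from s_1 to d_1) and P_22 (from s_2 to d_2) be disjoint paths. Fix i in {1,2} and suppose that, for the pair (P_11,P_22), at least two nodes cause interference on P_ii, i.e. n_i(G[V]) >= 2. Let v_p be the first node along P_ii such that every path from s_{i'} to d_i contains v_p. Then there exist two distinct in-neighbours u and w of v_p (u, w in I(v_p)) such that s_{i'}~>u and s_{i'}~>w. -/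
open List

section Helpers
variable {V : Type*} {E : V → V → Prop} {p q : List V} {a b c x y : V}

lemma isPath_singleton : IsPath E [a] a a := ⟨by simp, rfl, rfl, List.isChain_singleton _⟩

lemma reaches_refl : Reaches E a a := ⟨[a], isPath_singleton⟩

lemma IsPath.length_pos (h : IsPath E p a b) : 0 < p.length :=
  List.length_pos_iff.2 h.1

lemma IsPath.getElem_zero (h : IsPath E p a b) : p[0]'h.length_pos = a := by
  have h2 := h.2.1
  rw [List.head?_eq_head h.1] at h2
  rw [List.getElem_zero h.length_pos]
  exact Option.some_injective _ h2

lemma IsPath.getElem_last (h : IsPath E p a b) :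
    p[p.length - 1]'(Nat.sub_lt h.length_pos one_pos) = b := by
  have h2 := h.2.2.1
  rw [List.getLast?_eq_getLast (l := p) h.1, List.getLast_eq_getElem] at h2
  exact Option.some_injective _ h2

lemma IsPath.chain_getElem (h : IsPath E p a b) {i : ℕ} (hi : i + 1 < p.length) :
    E (p[i]'(by omega)) (p[i+1]'hi) := by
  have := List.isChain_iff_getElem.1 h.2.2.2 i (by omega)
  simpa using this

lemma isPath_append (hp : IsPath E p a x) (hq : IsPath E q y b) (h : E x y) :
    IsPath E (p ++ q) a b := by
  refine ⟨by simp [hp.1], ?_, ?_, ?_⟩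
  · rw [List.head?_append, hp.2.1]; rfl
  · rw [List.getLast?_append, hq.2.2.1]; rfl
  · rw [List.Chain', List.isChain_append]
    refine ⟨hp.2.2.2, hq.2.2.2, ?_⟩
    intro u hu v hv
    rw [hp.2.2.1] at hu; rw [hq.2.1] at hv
    cases hu; cases hv; exact h

lemma isPath_drop (hp : IsPath E p a b) {k : ℕ} (hk : k < p.length) :
    IsPath E (p.drop k) (p[k]) b := by
  have hlen : (p.drop k).length = p.length - k := by simp
  have hne : p.drop k ≠ [] := by
    intro hnil; rw [hnil] at hlen; simp at hlen; omega
  refine ⟨hne, ?_, ?_, hp.2.2.2.drop k⟩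
  · rw [List.head?_drop]; simp [List.getElem?_eq_getElem hk]
  · rw [List.getLast?_eq_getLast hne, List.getLast_eq_getElem]
    have h1 := List.getElem_drop (xs := p) (i := k) (j := (p.drop k).length - 1)
      (h := Nat.sub_lt (List.length_pos_iff.2 hne) one_pos)
    rw [h1]
    have h3 : p[k + ((p.drop k).length - 1)]'(by omega) = b := by
      have h4 := hp.getElem_last
      convert h4 using 2
      omega
    rw [h3]

lemma isPath_take (hp : IsPath E p a b) {k : ℕ} (hk : k < p.length) :
    IsPath E (p.take (k+1)) a (p[k]) := by
  have hlen : (p.take (k+1)).length = k + 1 := by simp; omega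
  have hne : p.take (k+1) ≠ [] := by intro hnil; rw [hnil] at hlen; simp at hlen
  refine ⟨hne, ?_, ?_, hp.2.2.2.take _⟩
  · rw [List.head?_eq_head hne, ← List.getElem_zero (List.length_pos_iff.2 hne)]
    have h1 := List.getElem_take (xs := p) (j := k+1) (i := 0) (h := List.length_pos_iff.2 hne)
    rw [h1, hp.getElem_zero]
  · rw [List.getLast?_eq_getLast hne, List.getLast_eq_getElem]
    have h1 := List.getElem_take (xs := p) (j := k+1) (i := (p.take (k+1)).length - 1)
      (h := Nat.sub_lt (List.length_pos_iff.2 hne) one_pos)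
    rw [h1]
    have h3 : p[(p.take (k+1)).length - 1]'(by omega) = p[k]'hk := by
      congr 1
      omega
    rw [h3]

/-- Predecessor lemma: every non-initial vertex of a path has an in-neighbour
on the path which is reachable from the start. -/
lemma exists_pred (hp : IsPath E p a b) {v : V} (hv : v ∈ p) (hva : v ≠ a) :
    ∃ u, u ∈ p ∧ E u v ∧ Reaches E a u := by
  obtain ⟨n, hn, hget⟩ := List.getElem_of_mem hv
  rcases Nat.eq_zero_or_pos n with h0 | h0
  · subst h0; rw [hp.getElem_zero] at hget; exact absurd hget.symm hva
  · refine ⟨p[n-1]'(by omega), List.getElem_mem _, ?_, ?_⟩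
    · have hch := hp.chain_getElem (i := n-1) (by omega)
      have hn1 : n - 1 + 1 = n := by omega
      simp only [hn1] at hch
      rwa [hget] at hch
    · exact ⟨p.take (n-1+1), isPath_take hp (by omega)⟩
end Helpers

section NetHelpers
variable {V : Type*} [Fintype V] (N : TwoUnicastNetwork V)

lemma layer_getElem {p : List V} {a b : V} (hp : IsPath N.E p a b) :
    ∀ k (h : k < p.length), N.layer (p[k]) = N.layer a + k := by
  intro k
  induction k with
  | zero => intro h; simp [hp.getElem_zero]
  | succ k ih =>
      intro h
      have he := hp.chain_getElem (i := k) h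
      rw [N.edge_layer _ _ he, ih (by omega)]
      omega

/-- A vertex of layer `1` distinct from the start of a path is not on that path. -/
lemma layer_one_not_mem {p : List V} {c b x : V} (hp : IsPath N.E p c b)
    (hx : N.layer x = 1) (hxc : x ≠ c) : x ∉ p := by
  intro hm
  obtain ⟨k, hk, hget⟩ := List.getElem_of_mem hm
  have hl := layer_getElem N hp k hk
  rw [hget, hx] at hl
  have hpos := N.layer_pos c
  have hk0 : k = 0 := by omega
  subst hk0
  rw [hp.getElem_zero] at hget
  exact hxc hget.symm

/-- The key lemma, stated for a generic source/destination pair. -/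
lemma key_lemma [DecidableEq V] (si di soi : V) (Pii : List V)
    (hPii : IsPath N.E Pii si di)
    (hsoi : soi = N.s1 ∨ soi = N.s2)
    (hne : si ≠ soi)
    (hn : 2 ≤ nInterf N Set.univ Pii soi)
    (vp : V) (hvpPii : vp ∈ Pii)
    (hvpcut : ∀ p : List V, IsPath N.E p soi di → vp ∈ p)
    (hvpfirst : ∀ u ∈ Pii, (∀ p : List V, IsPath N.E p soi di → u ∈ p) →
      Pii.idxOf vp ≤ Pii.idxOf u) :
    ∃ u w : V, u ≠ w ∧ N.E u vp ∧ N.E w vp ∧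
      Reaches N.E soi u ∧ Reaches N.E soi w := by
  classical
  by_contra hcon
  push_neg at hcon
  have huniq : ∀ u w : V, N.E u vp → N.E w vp → Reaches N.E soi u →
      Reaches N.E soi w → u = w := by
    intro u w h1 h2 h3 h4
    by_contra hne'
    exact hcon u w hne' h1 h2 h3 h4
  -- the other source is not on Pii
  have hsoiP : soi ∉ Pii :=
    layer_one_not_mem N hPii ((N.first_layer soi).2 hsoi) (Ne.symm hne)
  have hvpsoi : vp ≠ soi := fun h => hsoiP (h ▸ hvpPii)
  -- the interference set is nonempty
  have hfin : {v | InterferesOn N Set.univ Pii soi v}.Finite := Set.toFinite _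
  have hnonempty : {v | InterferesOn N Set.univ Pii soi v}.Nonempty := by
    rw [← Set.ncard_pos hfin]
    have : nInterf N Set.univ Pii soi =
        {v | InterferesOn N Set.univ Pii soi v}.ncard := rfl
    omega
  obtain ⟨v1, hv1⟩ := hnonempty
  -- build an soi → di path from the interferer v1
  obtain ⟨-, hv1P, ⟨w1, hw1P, -, hE1⟩, q1, hq1, -, hq1P⟩ := hv1
  obtain ⟨k1, hk1, hg1⟩ := List.getElem_of_mem hw1P
  have hPv1 : IsPath N.E (q1 ++ Pii.drop k1) soi di :=
    isPath_append hq1 (isPath_drop hPii hk1) (by rw [hg1]; exact hE1)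
  -- get a reachable in-neighbour u0 of vp
  obtain ⟨u0, hu0mem, hEu0, hRu0⟩ :=
    exists_pred hPv1 (hvpcut _ hPv1) hvpsoi
  by_cases hu0P : u0 ∈ Pii
  · -- u0 lies on Pii : it is a cut node earlier than vp : contradiction
    have hcut : ∀ p : List V, IsPath N.E p soi di → u0 ∈ p := by
      intro p hp
      obtain ⟨x, hxp, hEx, hRx⟩ := exists_pred hp (hvpcut p hp) hvpsoi
      have hx : x = u0 := huniq x u0 hEx hEu0 hRx hRu0
      exact hx ▸ hxp
    have hfirst := hvpfirst u0 hu0P hcut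
    have hkv := List.idxOf_lt_length_iff.2 hvpPii
    have hku := List.idxOf_lt_length_iff.2 hu0P
    have hlv := layer_getElem N hPii _ hkv
    have hlu := layer_getElem N hPii _ hku
    rw [List.getElem_idxOf hkv] at hlv
    rw [List.getElem_idxOf hku] at hlu
    have hedge := N.edge_layer _ _ hEu0
    omega
  · -- u0 off Pii : every interferer equals u0, so nInterf ≤ 1 : contradiction
    have hsub : {v | InterferesOn N Set.univ Pii soi v} ⊆ {u0} := by
      intro v hv
      obtain ⟨-, hvP, ⟨w, hwP, -, hEvw⟩, q, hq, -, hqP⟩ := hv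
      obtain ⟨k, hk, hgk⟩ := List.getElem_of_mem hwP
      have hdropPath := isPath_drop hPii hk
      have hPv : IsPath N.E (q ++ Pii.drop k) soi di :=
        isPath_append hq hdropPath (by rw [hgk]; exact hEvw)
      have hvpPv : vp ∈ q ++ Pii.drop k := hvpcut _ hPv
      have hvpq : vp ∉ q := fun h => hqP vp h hvpPii
      have hvpdrop : vp ∈ Pii.drop k := by
        rcases List.mem_append.1 hvpPv with h | h
        · exact absurd h hvpq
        · exact h
      by_cases hwvp : w = vp
      · -- direct edge into vp : v itself is a reachable in-neighbour of vp
        have hEv : N.E v vp := hwvp ▸ hEvw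
        have hv_eq : v = u0 := huniq v u0 hEv hEu0 ⟨q, hq⟩ hRu0
        exact hv_eq ▸ rfl
      · -- vp strictly later on Pii : its Pii-predecessor is a reachable
        -- in-neighbour lying on Pii, contradicting u0 ∉ Pii
        exfalso
        obtain ⟨m, hm, hgm⟩ := List.getElem_of_mem hvpdrop
        have hmlen : (Pii.drop k).length = Pii.length - k := by simp
        have hgm' : Pii[k + m]'(by omega) = vp := by
          rw [← List.getElem_drop (xs := Pii) (i := k) (j := m) (h := hm)]; exact hgm
        have hm0 : 0 < m := by
          rcases Nat.eq_zero_or_pos m with h0 | h0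
          · exfalso; apply hwvp
            subst h0
            rw [← hgk]
            simpa using hgm'
          · exact h0
        have hEt : N.E (Pii[k + m - 1]'(by omega)) vp := by
          have hch := hPii.chain_getElem (i := k + m - 1) (by omega)
          have h1 : k + m - 1 + 1 = k + m := by omega
          simp only [h1] at hch
          rwa [hgm'] at hch
        have htake := isPath_take hdropPath (k := m - 1) (by omega)
        have hgt : (Pii.drop k)[m-1]'(by omega) = Pii[k + m - 1]'(by omega) := by
          rw [List.getElem_drop (xs := Pii) (i := k) (j := m - 1) (h := by omega)]
          congr 1
          omega
        rw [hgt] at htake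
        have hRt : Reaches N.E soi (Pii[k + m - 1]'(by omega)) :=
          ⟨q ++ (Pii.drop k).take (m - 1 + 1),
            isPath_append hq htake (by rw [hgk]; exact hEvw)⟩
        have ht : (Pii[k + m - 1]'(by omega)) = u0 := huniq _ u0 hEt hEu0 hRt hRu0
        exact hu0P (ht ▸ List.getElem_mem _)
    have hle := Set.ncard_le_ncard hsub (Set.finite_singleton u0)
    rw [Set.ncard_singleton] at hle
    have : nInterf N Set.univ Pii soi =
        {v | InterferesOn N Set.univ Pii soi v}.ncard := rfl
    omega
end NetHelpers

theorem statement1 {V : Type*} [Fintype V] [DecidableEq V]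
    (N : TwoUnicastNetwork V) (P11 P22 : List V)
    (hP11 : IsPath N.E P11 N.s1 N.d1)
    (hP22 : IsPath N.E P22 N.s2 N.d2)
    (hdisj : P11.Disjoint P22)
    (si di soi : V) (Pii : List V)
    (hi : (si = N.s1 ∧ di = N.d1 ∧ soi = N.s2 ∧ Pii = P11) ∨
          (si = N.s2 ∧ di = N.d2 ∧ soi = N.s1 ∧ Pii = P22))
    (hn : 2 ≤ nInterf N Set.univ Pii soi)
    (vp : V)
    (hvpPii : vp ∈ Pii)
    (hvpcut : ∀ p : List V, IsPath N.E p soi di → vp ∈ p)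
    (hvpfirst : ∀ u ∈ Pii, (∀ p : List V, IsPath N.E p soi di → u ∈ p) →
      Pii.idxOf vp ≤ Pii.idxOf u) :
    ∃ u w : V, u ≠ w ∧ N.E u vp ∧ N.E w vp ∧
      Reaches N.E soi u ∧ Reaches N.E soi w := by
  rcases hi with ⟨h1, h2, h3, h4⟩ | ⟨h1, h2, h3, h4⟩
  · subst h1 h2 h3 h4
    exact key_lemma N N.s1 N.d1 N.s2 Pii hP11 (Or.inr rfl) N.s_ne hn vp hvpPii
      hvpcut hvpfirst
  · subst h1 h2 h3 h4
    exact key_lemma N N.s2 N.d2 N.s1 Pii hP22 (Or.inl rfl) (Ne.symm N.s_ne) hn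
      vp hvpPii hvpcut hvpfirst
end

section
/- Under the Case-C1 setup, every path from s_1 to d_2 contains both v_2 and v_0. -/
open List

/-- Along a directed chain, layers strictly increase: every vertex in the tail
has strictly larger layer than the starting vertex. -/
lemma layer_lt_of_chain {V : Type*} [Fintype V] (N : TwoUnicastNetwork V) :
    ∀ (l : List V) (a x : V), List.Chain N.E a l → x ∈ l → N.layer a < N.layer x := by
  intro l
  induction l with
  | nil => intro a x _ hx; cases hx
  | cons b t ih =>
      intro a x hch hx
      rcases List.chain_cons.mp hch with ⟨hab, hbt⟩
      have hlab : N.layer b = N.layer a + 1 := N.edge_layer a b hab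
      rcases List.mem_cons.mp hx with rfl | hx
      · omega
      · have := ih b x hbt hx
        omega

theorem statement3 {V : Type*} [Fintype V] [DecidableEq V]
    (N : TwoUnicastNetwork V)
    (P11 P22 Ps2v1 Pvmv1 Ps1v2 : List V)
    (v0 v1 v2 v3 v4 v5 v6 vm : V)
    (hP11 : IsPath N.E P11 N.s1 N.d1)
    (hP22 : IsPath N.E P22 N.s2 N.d2)
    (hdisj : P11.Disjoint P22)
    (hNoMan : ∀ R1 R2 : List V, IsPath N.E R1 N.s1 N.d1 → IsPath N.E R2 N.s2 N.d2 →
      R1.Disjoint R2 → ¬ Manageable N R1 R2)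
    (hn1 : 2 ≤ nInterf N Set.univ P11 N.s2)
    (hn1D : nDirect N P11 P22 N.s2 = 1)
    (hn2 : nInterf N Set.univ P22 N.s1 = 1)
    (hn2D : nDirect N P22 P11 N.s1 = 0)
    (hv3P22 : v3 ∈ P22)
    (hv3unique : {v | InterferesOn N Set.univ P11 N.s2 v ∧ v ∈ P22} = {v3})
    (hv4P11 : v4 ∈ P11)
    (hv3v4 : N.E v3 v4)
    (hv3v4unique : ∀ w ∈ P11, N.E v3 w → w = v4)
    (hv1P11 : v1 ∉ P11)
    (hv1P22 : v1 ∉ P22)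
    (hv1int : InterferesOn N Set.univ P11 N.s2 v1)
    (hPs2v1 : IsPath N.E Ps2v1 N.s2 v1)
    (hPs2v1disj : Ps2v1.Disjoint P11)
    (hvmP22 : vm ∈ P22)
    (hvmPs2v1 : vm ∈ Ps2v1)
    (hvmlast : ∀ x ∈ Ps2v1, x ∈ P22 → Ps2v1.idxOf x ≤ Ps2v1.idxOf vm)
    (hPvmv1 : IsPath N.E Pvmv1 vm v1)
    (hPvmv1suffix : Pvmv1 <:+ Ps2v1)
    (hv2Pvmv1 : v2 ∈ Pvmv1)
    (hv2ne : v2 ≠ vm)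
    (hv2unique : {v | InterferesOn N Set.univ P22 N.s1 v} = {v2})
    (hv0P22 : v0 ∈ P22)
    (hv2v0 : N.E v2 v0)
    (hv2v0unique : ∀ w ∈ P22, N.E v2 w → w = v0)
    (hPs1v2 : IsPath N.E Ps1v2 N.s1 v2)
    (hPs1v2sub : ∀ x ∈ Ps1v2, x ∈ P11 ∨ x ∈ P22 ∨ x ∈ Pvmv1)
    (hv5P11 : v5 ∈ P11)
    (hv5mem : v5 ∈ Ps1v2)
    (hv5last : ∀ x ∈ Ps1v2, x ∈ P11 → Ps1v2.idxOf x ≤ Ps1v2.idxOf v5)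
    (hv6succ : ∃ k : ℕ, Ps1v2[k]? = some v5 ∧ Ps1v2[k+1]? = some v6) :
    ∀ p : List V, IsPath N.E p N.s1 N.d2 → v2 ∈ p ∧ v0 ∈ p := by
  classical
  intro p hp
  obtain ⟨hne, hhead, hlast, hchain⟩ := hp
  obtain ⟨hne22, hhead22, hlast22, hchain22⟩ := hP22
  -- s1 does not lie on P22 (layer argument)
  have hs1P22 : N.s1 ∉ P22 := by
    intro hmem
    cases P22 with
    | nil => exact hne22 rfl
    | cons a t =>
      simp only [List.head?_cons, Option.some.injEq] at hhead22
      subst hhead22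
      rcases List.mem_cons.mp hmem with h | h
      · exact N.s_ne h
      · have hlt := layer_lt_of_chain N t N.s2 N.s1 hchain22 h
        have h1 : N.layer N.s1 = 1 := (N.first_layer N.s1).mpr (Or.inl rfl)
        have h2 : N.layer N.s2 = 1 := (N.first_layer N.s2).mpr (Or.inr rfl)
        omega
  have hlen0 : 0 < p.length := List.length_pos_iff.mpr hne
  have hp0 : p[0]'hlen0 = N.s1 := by
    rw [List.head?_eq_getElem?, List.getElem?_eq_getElem hlen0] at hhead
    exact Option.some.inj hhead
  -- d2 is on p and on P22
  have hd2p : ∃ i, ∃ h : i < p.length, p[i] ∈ P22 := by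
    have h1 : N.d2 ∈ P22 := by
      rw [List.getLast?_eq_getElem? ] at hlast22
      obtain ⟨h, hval⟩ := List.getElem?_eq_some_iff.mp hlast22
      exact hval ▸ List.getElem_mem h
    have h2 : N.d2 ∈ p := by
      rw [List.getLast?_eq_getElem? ] at hlast
      obtain ⟨h, hval⟩ := List.getElem?_eq_some_iff.mp hlast
      exact hval ▸ List.getElem_mem h
    obtain ⟨j, hj, hjval⟩ := List.mem_iff_getElem.mp h2
    exact ⟨j, hj, hjval ▸ h1⟩
  -- k : first index of p lying on P22
  let k := Nat.find hd2p
  obtain ⟨hklt, hkmem⟩ : ∃ h : k < p.length, p[k] ∈ P22 := Nat.find_spec hd2p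
  have hmin : ∀ i, i < k → ∀ h : i < p.length, p[i] ∉ P22 := by
    intro i hi h hmem
    exact Nat.find_min hd2p hi ⟨h, hmem⟩
  have hk0 : k ≠ 0 := by
    intro h0
    apply hs1P22
    have hkmem' := hkmem
    simp only [h0] at hkmem'
    exact hp0 ▸ hkmem'
  have hmlt : k - 1 < p.length := by omega
  -- edge from p[k-1] to p[k]
  have hedge : N.E (p[k-1]'hmlt) (p[k]'hklt) := by
    have h := List.isChain_iff_getElem.mp hchain (k-1) (by omega)
    have hco : k - 1 + 1 = k := by omega
    simpa [List.get_eq_getElem, hco] using h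
  -- the prefix of p before index k is a path from s1 to p[k-1], disjoint from P22
  set q := p.take k with hq
  have hqlen : q.length = k := by
    simp [hq, List.length_take]; omega
  have hqpath : IsPath N.E q N.s1 (p[k-1]'hmlt) := by
    refine ⟨?_, ?_, ?_, hchain.take k⟩
    · exact List.ne_nil_of_length_pos (by omega)
    · rw [List.head?_eq_getElem?, hq, List.getElem?_take,
        if_pos (by omega : 0 < k), List.getElem?_eq_getElem hlen0, hp0]
    · rw [List.getLast?_eq_getElem?, hqlen, hq, List.getElem?_take,
        if_pos (by omega : k - 1 < k), List.getElem?_eq_getElem hmlt]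
  have hqnot : ∀ x ∈ q, x ∉ P22 := by
    intro x hx
    obtain ⟨i, hi, hival⟩ := List.mem_take_iff_getElem.mp hx
    have hik : i < k := lt_of_lt_of_le hi inf_le_left
    exact hival ▸ hmin i hik (lt_of_lt_of_le hi inf_le_right)
  -- p[k-1] causes interference on P22, hence equals v2
  have hint : InterferesOn N Set.univ P22 N.s1 (p[k-1]'hmlt) := by
    refine ⟨Set.mem_univ _, hmin (k-1) (by omega) hmlt,
      ⟨p[k]'hklt, hkmem, Set.mem_univ _, hedge⟩,
      q, hqpath, fun x _ => Set.mem_univ _, hqnot⟩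
  have hv2eq : p[k-1]'hmlt = v2 := by
    have hmem2 : (p[k-1]'hmlt) ∈ {v | InterferesOn N Set.univ P22 N.s1 v} := hint
    rw [hv2unique] at hmem2
    exact hmem2
  have hv0eq : p[k]'hklt = v0 :=
    hv2v0unique _ hkmem (hv2eq ▸ hedge)
  exact ⟨hv2eq ▸ List.getElem_mem hmlt, hv0eq ▸ List.getElem_mem hklt⟩
end

section
/- Under the Case-C1 setup, every path from s_1 to d_2 contains both v_5 and v_6. -/
open List

section AuxLemmas

variable {V : Type*} {E : V → V → Prop} {l l' : List V} {a b c x : V}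

lemma aux_head (h : IsPath E l a b) : l.head h.1 = a := by
  have h2 := h.2.1
  rwa [List.head?_eq_head h.1, Option.some_inj] at h2

lemma aux_getLast (h : IsPath E l a b) : l.getLast h.1 = b := by
  have h2 := h.2.2.1
  rwa [List.getLast?_eq_getLast h.1, Option.some_inj] at h2

lemma aux_head_mem (h : IsPath E l a b) : a ∈ l := aux_head h ▸ List.head_mem h.1

lemma aux_getLast_mem (h : IsPath E l a b) : b ∈ l := aux_getLast h ▸ List.getLast_mem h.1

lemma aux_isPath_take [DecidableEq V] (h : IsPath E l a b) (hx : x ∈ l) :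
    IsPath E (l.take (l.idxOf x + 1)) a x := by
  have hlt : l.idxOf x < l.length := List.idxOf_lt_length_iff.mpr hx
  have hlen : (l.take (l.idxOf x + 1)).length = l.idxOf x + 1 := by
    rw [List.length_take]; omega
  have hne : l.take (l.idxOf x + 1) ≠ [] := by
    intro hcon; rw [hcon] at hlen; simp at hlen
  refine ⟨hne, ?_, ?_, h.2.2.2.prefix (List.take_prefix _ _)⟩
  · rw [List.head?_eq_head hne, Option.some_inj, ← List.getElem_zero (by omega),
      List.getElem_take, List.getElem_zero (by omega)]
    exact aux_head h
  · rw [List.getLast?_eq_getLast hne, Option.some_inj, List.getLast_eq_getElem]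
    simp only [hlen, Nat.add_sub_cancel]
    rw [List.getElem_take]
    exact List.getElem_idxOf hlt

lemma aux_isPath_drop [DecidableEq V] (h : IsPath E l a b) (hx : x ∈ l) :
    IsPath E (l.drop (l.idxOf x)) x b := by
  have hlt : l.idxOf x < l.length := List.idxOf_lt_length_iff.mpr hx
  have hne : l.drop (l.idxOf x) ≠ [] := by
    intro hcon
    have := congrArg List.length hcon
    rw [List.length_drop] at this; simp at this; omega
  refine ⟨hne, ?_, ?_, h.2.2.2.drop _⟩
  · rw [List.head?_eq_head hne, Option.some_inj, List.head_drop]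
    exact List.getElem_idxOf hlt
  · rw [List.getLast?_eq_getLast hne, Option.some_inj, List.getLast_drop]
    exact aux_getLast h

lemma aux_isPath_append (h1 : IsPath E l a b) (h2 : IsPath E l' b c) :
    IsPath E (l ++ l'.tail) a c := by
  obtain ⟨hne', hh', hl', hc'⟩ := h2
  match l', hne' with
  | [y], _ =>
    simp only [List.head?_cons, Option.some_inj] at hh'
    simp only [List.getLast?_singleton, Option.some_inj] at hl'
    simpa [← hh', ← hl'] using h1
  | y :: z :: t, _ =>
    have hyb : y = b := by simpa using hh'
    have hEyz : E y z := (List.isChain_cons_cons.mp hc').1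
    have hct : (z :: t).Chain' E := (List.isChain_cons_cons.mp hc').2
    have htne : (l ++ (z :: t)) ≠ [] := by simp [h1.1]
    show IsPath E (l ++ (z :: t)) a c
    refine ⟨htne, ?_, ?_, ?_⟩
    · rw [List.head?_eq_head htne, Option.some_inj, List.head_append]
      simp [h1.1, aux_head h1]
    · rw [List.getLast?_eq_getLast htne, Option.some_inj, List.getLast_append]
      have : (z :: t).getLast (by simp) = c := by
        have := hl'
        rwa [List.getLast?_eq_getLast (by simp), Option.some_inj,
          List.getLast_cons (by simp)] at this
      simp [this]
    · rw [show List.Chain' E (l ++ z :: t) ↔ _ from List.isChain_append]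
      refine ⟨h1.2.2.2, hct, ?_⟩
      intro p hp q hq
      rw [h1.2.2.1] at hp
      simp only [Option.mem_def, List.head?_cons, Option.some_inj] at hp hq
      subst hp; subst hq
      rw [← hyb]; exact hEyz

lemma aux_isPath_cons {v : V} (h : IsPath E l b c) (hv : E v b) :
    IsPath E (v :: l) v c := by
  refine ⟨by simp, by simp, ?_, ?_⟩
  · rw [List.getLast?_eq_getLast (by simp), Option.some_inj,
      List.getLast_cons h.1]
    exact aux_getLast h
  · rw [show List.Chain' E (v :: l) ↔ _ from List.isChain_cons]
    refine ⟨fun y hy => ?_, h.2.2.2⟩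
    rw [h.2.1] at hy
    simp only [Option.mem_def, Option.some_inj] at hy
    subst hy; exact hv

end AuxLemmas


section LayerLemmas

variable {V : Type*} [Fintype V] (N : TwoUnicastNetwork V)

lemma aux_pairwise {l : List V} (h : l.Chain' N.E) :
    l.Pairwise (fun a b => N.layer a < N.layer b) := by
  have h2 : l.Chain' (fun a b => N.layer a < N.layer b) :=
    h.imp (fun a b hab => by rw [N.edge_layer a b hab]; omega)
  have : IsTrans V (fun a b => N.layer a < N.layer b) := ⟨fun a b c h1 h2 => lt_trans h1 h2⟩
  exact List.isChain_iff_pairwise.mp h2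

lemma aux_nodup {l : List V} (h : l.Chain' N.E) : l.Nodup :=
  (aux_pairwise N h).imp fun hab heq => absurd (congrArg N.layer heq) (ne_of_lt hab)

lemma aux_layer_inj {l : List V} (h : l.Chain' N.E) {a b : V} (ha : a ∈ l) (hb : b ∈ l)
    (hl : N.layer a = N.layer b) : a = b := by
  obtain ⟨i, hi, rfl⟩ := List.mem_iff_getElem.mp ha
  obtain ⟨j, hj, rfl⟩ := List.mem_iff_getElem.mp hb
  have hp := List.pairwise_iff_getElem.mp (aux_pairwise N h)
  rcases lt_trichotomy i j with h' | h' | h'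
  · exact absurd hl (ne_of_lt (hp i j hi hj h'))
  · subst h'; rfl
  · exact absurd hl.symm (ne_of_lt (hp j i hj hi h'))

end LayerLemmas

lemma aux_indexOf {V : Type*} [DecidableEq V] {l : List V} (hn : l.Nodup) {i : ℕ}
    (hi : i < l.length) : l.idxOf l[i] = i := by
  have hmem : l[i] ∈ l := List.getElem_mem hi
  have h1 : l.idxOf l[i] < l.length := List.idxOf_lt_length_iff.mpr hmem
  have h2 : l[l.idxOf l[i]] = l[i] := List.getElem_idxOf h1
  exact (hn.getElem_inj_iff).mp h2


theorem statement4 {V : Type*} [Fintype V] [DecidableEq V]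
    (N : TwoUnicastNetwork V)
    (P11 P22 Ps2v1 Pvmv1 Ps1v2 : List V)
    (v0 v1 v2 v3 v4 v5 v6 vm : V)
    (hP11 : IsPath N.E P11 N.s1 N.d1)
    (hP22 : IsPath N.E P22 N.s2 N.d2)
    (hdisj : P11.Disjoint P22)
    (hNoMan : ∀ R1 R2 : List V, IsPath N.E R1 N.s1 N.d1 → IsPath N.E R2 N.s2 N.d2 →
      R1.Disjoint R2 → ¬ Manageable N R1 R2)
    (hn1 : 2 ≤ nInterf N Set.univ P11 N.s2)
    (hn1D : nDirect N P11 P22 N.s2 = 1)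
    (hn2 : nInterf N Set.univ P22 N.s1 = 1)
    (hn2D : nDirect N P22 P11 N.s1 = 0)
    (hv3P22 : v3 ∈ P22)
    (hv3unique : {v | InterferesOn N Set.univ P11 N.s2 v ∧ v ∈ P22} = {v3})
    (hv4P11 : v4 ∈ P11)
    (hv3v4 : N.E v3 v4)
    (hv3v4unique : ∀ w ∈ P11, N.E v3 w → w = v4)
    (hv1P11 : v1 ∉ P11)
    (hv1P22 : v1 ∉ P22)
    (hv1int : InterferesOn N Set.univ P11 N.s2 v1)
    (hPs2v1 : IsPath N.E Ps2v1 N.s2 v1)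
    (hPs2v1disj : Ps2v1.Disjoint P11)
    (hvmP22 : vm ∈ P22)
    (hvmPs2v1 : vm ∈ Ps2v1)
    (hvmlast : ∀ x ∈ Ps2v1, x ∈ P22 → Ps2v1.idxOf x ≤ Ps2v1.idxOf vm)
    (hPvmv1 : IsPath N.E Pvmv1 vm v1)
    (hPvmv1suffix : Pvmv1 <:+ Ps2v1)
    (hv2Pvmv1 : v2 ∈ Pvmv1)
    (hv2ne : v2 ≠ vm)
    (hv2unique : {v | InterferesOn N Set.univ P22 N.s1 v} = {v2})
    (hv0P22 : v0 ∈ P22)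
    (hv2v0 : N.E v2 v0)
    (hv2v0unique : ∀ w ∈ P22, N.E v2 w → w = v0)
    (hPs1v2 : IsPath N.E Ps1v2 N.s1 v2)
    (hPs1v2sub : ∀ x ∈ Ps1v2, x ∈ P11 ∨ x ∈ P22 ∨ x ∈ Pvmv1)
    (hv5P11 : v5 ∈ P11)
    (hv5mem : v5 ∈ Ps1v2)
    (hv5last : ∀ x ∈ Ps1v2, x ∈ P11 → Ps1v2.idxOf x ≤ Ps1v2.idxOf v5)
    (hv6succ : ∃ k : ℕ, Ps1v2[k]? = some v5 ∧ Ps1v2[k+1]? = some v6) :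
    ∀ p : List V, IsPath N.E p N.s1 N.d2 → v5 ∈ p ∧ v6 ∈ p := by
  classical
  intro p hp
  have hcP22 := hP22.2.2.2
  have hcPv := hPvmv1.2.2.2
  have hcPs1v2 := hPs1v2.2.2.2
  -- v5, v6 positions and the edge v5 → v6
  obtain ⟨k, hk1, hk2⟩ := hv6succ
  obtain ⟨hk1lt, hk1e⟩ := List.getElem?_eq_some_iff.mp hk1
  obtain ⟨hk2lt, hk2e⟩ := List.getElem?_eq_some_iff.mp hk2
  have hEv5v6 : N.E v5 v6 := by
    have h2 := List.isChain_iff_getElem.mp hcPs1v2 k (by omega)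
    simpa [List.get_eq_getElem, hk1e, hk2e] using h2
  have hv6mem : v6 ∈ Ps1v2 := hk2e ▸ List.getElem_mem hk2lt
  have hPs1v2nd : Ps1v2.Nodup := aux_nodup N hcPs1v2
  -- v6 ∉ P11
  have hv6P11 : v6 ∉ P11 := by
    intro h
    have h1 := hv5last v6 hv6mem h
    have e1 : Ps1v2.idxOf v6 = k + 1 := by rw [← hk2e]; exact aux_indexOf hPs1v2nd hk2lt
    have e2 : Ps1v2.idxOf v5 = k := by rw [← hk1e]; exact aux_indexOf hPs1v2nd hk1lt
    omega
  have hv5nP22 : v5 ∉ P22 := fun h => hdisj hv5P11 h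
  -- v6 ∉ P22, else v5 would be a direct interferer on P22, contradicting n2D = 0
  have hv6P22 : v6 ∉ P22 := by
    intro h
    have hn2D' : ({v | InterferesOn N Set.univ P22 N.s1 v ∧ v ∈ P11} : Set V).ncard = 0 := hn2D
    have hempty := (Set.ncard_eq_zero (Set.toFinite _)).mp hn2D'
    have hv5i : InterferesOn N Set.univ P22 N.s1 v5 :=
      ⟨Set.mem_univ _, hv5nP22, ⟨v6, h, Set.mem_univ _, hEv5v6⟩,
        ⟨P11.take (P11.idxOf v5 + 1), aux_isPath_take hP11 hv5P11,
         fun x _ => Set.mem_univ _, fun x hx hx2 => hdisj (List.mem_of_mem_take hx) hx2⟩⟩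
    have hmem : v5 ∈ ({v | InterferesOn N Set.univ P22 N.s1 v ∧ v ∈ P11} : Set V) :=
      ⟨hv5i, hv5P11⟩
    rw [hempty] at hmem
    exact hmem
  have hv6Pvm : v6 ∈ Pvmv1 := by
    rcases hPs1v2sub v6 hv6mem with h | h | h
    · exact absurd h hv6P11
    · exact absurd h hv6P22
    · exact h
  -- layer v6 ≤ layer v2
  have hlay62 : N.layer v6 ≤ N.layer v2 := by
    have hpw := List.pairwise_iff_getElem.mp (aux_pairwise N hcPs1v2)
    have hneP : Ps1v2 ≠ [] := hPs1v2.1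
    have hlast : Ps1v2[Ps1v2.length - 1] = v2 := by
      rw [← List.getLast_eq_getElem hneP]; exact aux_getLast hPs1v2
    have hlenpos : 0 < Ps1v2.length := by omega
    rcases Nat.lt_or_ge (k + 1) (Ps1v2.length - 1) with hlt | hge
    · have h2 := hpw (k + 1) (Ps1v2.length - 1) hk2lt (by omega) hlt
      rw [hk2e, hlast] at h2
      exact le_of_lt h2
    · have heq : Ps1v2[k + 1]? = some v2 := by
        rw [show k + 1 = Ps1v2.length - 1 by omega]
        rw [List.getElem?_eq_getElem (by omega), hlast]
      rw [hk2] at heq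
      rw [Option.some_inj.mp heq]
  -- index comparison in Pvmv1
  have hPvnd : Pvmv1.Nodup := aux_nodup N hcPv
  have hv2lt : Pvmv1.idxOf v2 < Pvmv1.length := List.idxOf_lt_length_iff.mpr hv2Pvmv1
  have hv6lt : Pvmv1.idxOf v6 < Pvmv1.length := List.idxOf_lt_length_iff.mpr hv6Pvm
  have hidx62 : Pvmv1.idxOf v6 ≤ Pvmv1.idxOf v2 := by
    by_contra hcon
    push_neg at hcon
    have hpw := List.pairwise_iff_getElem.mp (aux_pairwise N hcPv)
    have h2 := hpw _ _ hv2lt hv6lt hcon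
    rw [List.getElem_idxOf hv2lt, List.getElem_idxOf hv6lt] at h2
    omega
  -- the rerouted path R2 : s2 → vm → v2 → v0 → d2
  set A1 := P22.take (P22.idxOf vm + 1) with hA1def
  set Pv := Pvmv1.take (Pvmv1.idxOf v2 + 1) with hPvdef
  set A3 := P22.drop (P22.idxOf v0) with hA3def
  have hA1 : IsPath N.E A1 N.s2 vm := aux_isPath_take hP22 hvmP22
  have hPvp : IsPath N.E Pv vm v2 := aux_isPath_take hPvmv1 hv2Pvmv1
  have hA3 : IsPath N.E A3 v0 N.d2 := aux_isPath_drop hP22 hv0P22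
  have hR2a : IsPath N.E (A1 ++ Pv.tail) N.s2 v2 := aux_isPath_append hA1 hPvp
  have hstep : IsPath N.E (v2 :: A3) v2 N.d2 := aux_isPath_cons hA3 hv2v0
  set R2 := (A1 ++ Pv.tail) ++ (v2 :: A3).tail with hR2def
  have hR2 : IsPath N.E R2 N.s2 N.d2 := aux_isPath_append hR2a hstep
  have htail : (v2 :: A3).tail = A3 := rfl
  have hR2sub : ∀ x ∈ R2, x ∈ P22 ∨ x ∈ Pvmv1 := by
    intro x hx
    rw [hR2def, htail] at hx
    rcases List.mem_append.mp hx with hx | hx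
    · rcases List.mem_append.mp hx with hx | hx
      · exact Or.inl (List.mem_of_mem_take hx)
      · exact Or.inr (List.mem_of_mem_take (List.mem_of_mem_tail hx))
    · exact Or.inl (List.mem_of_mem_drop hx)
  have hR2nP11 : ∀ x ∈ R2, x ∉ P11 := by
    intro x hx h11
    rcases hR2sub x hx with h | h
    · exact hdisj h11 h
    · exact hPs2v1disj (hPvmv1suffix.subset h) h11
  have hP11dR2 : P11.Disjoint R2 := fun a ha hr => hR2nP11 a hr ha
  -- v6 ∈ R2
  have hv6Pv : v6 ∈ Pv := by
    refine List.mem_iff_getElem.mpr ⟨Pvmv1.idxOf v6, ?_, ?_⟩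
    · rw [hPvdef, List.length_take]; omega
    · have hgoal : (Pvmv1.take (Pvmv1.idxOf v2 + 1))[Pvmv1.idxOf v6]'(by
          rw [List.length_take]; omega) = v6 := by
        rw [List.getElem_take]; exact List.getElem_idxOf hv6lt
      exact hgoal
  have hv6nvm : v6 ≠ vm := fun h => hv6P22 (h ▸ hvmP22)
  have hv6tail : v6 ∈ Pv.tail := by
    have hh : Pv.head hPvp.1 = vm := aux_head hPvp
    have hct := List.cons_head_tail hPvp.1
    rw [hh] at hct
    rw [← hct] at hv6Pv
    rcases List.mem_cons.mp hv6Pv with h | h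
    · exact absurd h hv6nvm
    · exact h
  have hv6R2 : v6 ∈ R2 := by
    rw [hR2def, htail]
    exact List.mem_append.mpr (Or.inl (List.mem_append.mpr (Or.inr hv6tail)))
  -- basic source facts
  have hs1P11 : N.s1 ∈ P11 := aux_head_mem hP11
  have hs1nP22 : N.s1 ∉ P22 := by
    intro h
    have hs2P22 : N.s2 ∈ P22 := aux_head_mem hP22
    have l1 : N.layer N.s1 = 1 := (N.first_layer N.s1).mpr (Or.inl rfl)
    have l2 : N.layer N.s2 = 1 := (N.first_layer N.s2).mpr (Or.inr rfl)
    exact N.s_ne (aux_layer_inj N hcP22 h hs2P22 (by rw [l1, l2]))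
  have hs1nR2 : N.s1 ∉ R2 := by
    intro h
    rcases hR2sub _ h with h | h
    · exact hs1nP22 h
    · exact hPs2v1disj (hPvmv1suffix.subset h) hs1P11
  have hd2R2 : N.d2 ∈ R2 := aux_getLast_mem hR2
  -- the set S
  set S : Set V := {x | x ∈ P11 ∨ x ∈ P22 ∨ x ∈ Ps2v1 ∨ x ∈ p} with hSdef
  have hSP11 : ∀ x ∈ P11, x ∈ S := fun x h => Or.inl h
  have hSP22 : ∀ x ∈ P22, x ∈ S := fun x h => Or.inr (Or.inl h)
  have hSPs2v1 : ∀ x ∈ Ps2v1, x ∈ S := fun x h => Or.inr (Or.inr (Or.inl h))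
  have hSp : ∀ x ∈ p, x ∈ S := fun x h => Or.inr (Or.inr (Or.inr h))
  have hSR2 : ∀ x ∈ R2, x ∈ S := by
    intro x hx
    rcases hR2sub x hx with h | h
    · exact hSP22 x h
    · exact hSPs2v1 x (hPvmv1suffix.subset h)
  -- two interferers on P11 in G[S] : v3 and v1
  have hv3nP11 : v3 ∉ P11 := fun h => hdisj h hv3P22
  have hIv3 : InterferesOn N S P11 N.s2 v3 :=
    ⟨hSP22 v3 hv3P22, hv3nP11, ⟨v4, hv4P11, hSP11 v4 hv4P11, hv3v4⟩,
      ⟨P22.take (P22.idxOf v3 + 1), aux_isPath_take hP22 hv3P22,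
        fun x hx => hSP22 x (List.mem_of_mem_take hx),
        fun x hx h11 => hdisj h11 (List.mem_of_mem_take hx)⟩⟩
  have hv1Ps2v1 : v1 ∈ Ps2v1 := aux_getLast_mem hPs2v1
  obtain ⟨-, -, ⟨w1, hw1P11, -, hEw1⟩, -⟩ := hv1int
  have hIv1 : InterferesOn N S P11 N.s2 v1 :=
    ⟨hSPs2v1 v1 hv1Ps2v1, hv1P11, ⟨w1, hw1P11, hSP11 w1 hw1P11, hEw1⟩,
      ⟨Ps2v1, hPs2v1, fun x hx => hSPs2v1 x hx, fun x hx => hPs2v1disj hx⟩⟩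
  have hn1ne : nInterf N S P11 N.s2 ≠ 1 := by
    intro h
    have h' : ({v | InterferesOn N S P11 N.s2 v} : Set V).ncard = 1 := h
    obtain ⟨a, ha⟩ := Set.ncard_eq_one.mp h'
    have h3 : v3 ∈ ({v | InterferesOn N S P11 N.s2 v} : Set V) := hIv3
    have h1 : v1 ∈ ({v | InterferesOn N S P11 N.s2 v} : Set V) := hIv1
    rw [ha, Set.mem_singleton_iff] at h3 h1
    exact hv1P22 ((h1.trans h3.symm) ▸ hv3P22)
  -- non-manageability forces n2(G[S]) w.r.t. R2 to be 1
  have hn2eq : ({v | InterferesOn N S R2 N.s1 v} : Set V).ncard = 1 := by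
    by_contra hne
    exact hNoMan P11 R2 hP11 hR2 hP11dR2 ⟨S, hSP11, hSR2, hn1ne, hne⟩
  obtain ⟨a, ha⟩ := Set.ncard_eq_one.mp hn2eq
  -- v5 is an interferer on R2 in G[S]
  have hv5nR2 : v5 ∉ R2 := fun h => hR2nP11 v5 h hv5P11
  have hIv5 : InterferesOn N S R2 N.s1 v5 :=
    ⟨hSP11 v5 hv5P11, hv5nR2, ⟨v6, hv6R2, hSR2 v6 hv6R2, hEv5v6⟩,
      ⟨P11.take (P11.idxOf v5 + 1), aux_isPath_take hP11 hv5P11,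
        fun x hx => hSP11 x (List.mem_of_mem_take hx),
        fun x hx h => hR2nP11 x h (List.mem_of_mem_take hx)⟩⟩
  -- decompose p at its first vertex in R2
  have hpne := hp.1
  have hcp := hp.2.2.2
  set pr : V → Bool := fun x => decide (x ∉ R2) with hprdef
  set tw := p.takeWhile pr with htwdef
  set dw := p.dropWhile pr with hdwdef
  have htwdw : tw ++ dw = p := List.takeWhile_append_dropWhile
  have hd2p : N.d2 ∈ p := aux_getLast_mem hp
  have hdwne : dw ≠ [] := by
    intro h
    have h2 := htwdw
    rw [h, List.append_nil] at h2
    have h3 : N.d2 ∈ tw := h2 ▸ hd2p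
    have h4 := List.mem_takeWhile_imp h3
    simp only [hprdef, decide_eq_true_eq] at h4
    exact h4 hd2R2
  set w := dw.head hdwne with hwdef
  have hwR2 : w ∈ R2 := by
    have h2 : pr (dw.head hdwne) = false := List.head_dropWhile_not pr hdwne
    rw [← hwdef] at h2
    simp only [hprdef, decide_eq_false_iff_not, not_not] at h2
    exact h2
  have htwne : tw ≠ [] := by
    intro h
    have h2 := htwdw
    rw [h, List.nil_append] at h2
    apply hs1nR2
    have h3 : dw.head? = some N.s1 := by rw [h2]; exact hp.2.1
    rw [List.head?_eq_head hdwne, Option.some_inj] at h3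
    rw [← hwdef] at h3
    rw [← h3]
    exact hwR2
  set u := tw.getLast htwne with hudef
  have htwprefix : tw <+: p := List.takeWhile_prefix pr
  have htwpath : IsPath N.E tw N.s1 u := by
    refine ⟨htwne, ?_, by rw [List.getLast?_eq_getLast htwne, hudef], hcp.prefix htwprefix⟩
    rw [List.head?_eq_head htwne, Option.some_inj]
    have h2 : (tw ++ dw).head? = some N.s1 := by rw [htwdw]; exact hp.2.1
    rw [List.head?_eq_head (by simp [htwne]), Option.some_inj] at h2
    rw [← h2, List.head_append]
    simp [htwne]
  have htwnotR2 : ∀ x ∈ tw, x ∉ R2 := by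
    intro x hx
    have h2 := List.mem_takeWhile_imp hx
    simpa only [hprdef, decide_eq_true_eq] using h2
  have humem : u ∈ tw := by rw [hudef]; exact tw.getLast_mem htwne
  have huR2 : u ∉ R2 := htwnotR2 u humem
  have hEuw : N.E u w := by
    have hc2 : (tw ++ dw).Chain' N.E := by rw [htwdw]; exact hcp
    obtain ⟨-, -, hlink⟩ := List.isChain_append.mp hc2
    have hu' : tw.getLast? = some u := by
      rw [List.getLast?_eq_getLast htwne, hudef]
    have hw' : dw.head? = some w := by
      rw [List.head?_eq_head hdwne, hwdef]
    exact hlink u hu' w hw'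
  have hup : u ∈ p := htwprefix.subset humem
  have hwmem : w ∈ dw := by rw [hwdef]; exact dw.head_mem hdwne
  have hwp : w ∈ p := (List.dropWhile_suffix pr).subset hwmem
  have hIu : InterferesOn N S R2 N.s1 u :=
    ⟨hSp u hup, huR2, ⟨w, hwR2, hSp w hwp, hEuw⟩,
      ⟨tw, htwpath, fun x hx => hSp x (htwprefix.subset hx), htwnotR2⟩⟩
  have huv5 : u = v5 := by
    have h1 : u ∈ ({v | InterferesOn N S R2 N.s1 v} : Set V) := hIu
    have h2 : v5 ∈ ({v | InterferesOn N S R2 N.s1 v} : Set V) := hIv5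
    rw [ha, Set.mem_singleton_iff] at h1 h2
    rw [h1, h2]
  have hv5p : v5 ∈ p := huv5 ▸ hup
  have hwv6 : w = v6 := by
    apply aux_layer_inj N hR2.2.2.2 hwR2 hv6R2
    rw [N.edge_layer u w hEuw, N.edge_layer v5 v6 hEv5v6, huv5]
  exact ⟨hv5p, hwv6 ▸ hwp⟩
end

section
/- Under the Case-C1 setup, the removal of v_0 disconnects d_2 from both sources; that is, every path from s_1 to d_2 contains v_0 and every path from s_2 to d_2 contains v_0. -/
open List

namespace PathAux
variable {V : Type*} {E : V → V → Prop} {p q : List V} {a b m c : V}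

theorem length_pos (h : IsPath E p a b) : 0 < p.length :=
  List.length_pos_iff.mpr h.1

theorem head_eq (h : IsPath E p a b) : p[0]'(length_pos h) = a := by
  have := h.2.1
  rwa [List.head?_eq_head h.1, Option.some_inj, List.head_eq_getElem_zero h.1] at this

theorem last_eq (h : IsPath E p a b) : p[p.length - 1]'(by have := length_pos h; omega) = b := by
  have := h.2.2.1
  rwa [List.getLast?_eq_getLast h.1, Option.some_inj, List.getLast_eq_getElem] at this

theorem chain'_getElem (h : p.Chain' E) {i : ℕ} (hi : i + 1 < p.length) :
    E (p[i]'(by omega)) (p[i+1]'hi) := by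
  have := List.isChain_iff_getElem.mp h i (by omega)
  simpa [List.get_eq_getElem] using this

theorem mem_left (h : IsPath E p a b) : a ∈ p := by
  have := head_eq h; exact this ▸ List.getElem_mem _
theorem mem_right (h : IsPath E p a b) : b ∈ p := by
  have := last_eq h; exact this ▸ List.getElem_mem _

theorem mk_isPath (hne : p ≠ []) (hh : p[0]'(List.length_pos_iff.mpr hne) = a)
    (hl : p[p.length - 1]'(by have := List.length_pos_iff.mpr hne; omega) = b)
    (hc : p.Chain' E) : IsPath E p a b := by
  refine ⟨hne, ?_, ?_, hc⟩
  · rw [List.head?_eq_head hne, Option.some_inj, List.head_eq_getElem_zero hne]; exact hh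
  · rw [List.getLast?_eq_getLast hne, Option.some_inj, List.getLast_eq_getElem]; exact hl

theorem isPath_singleton : IsPath E [a] a a := ⟨by simp, rfl, rfl, List.isChain_singleton a⟩

theorem isPath_take (h : IsPath E p a b) {i : ℕ} (hi : i < p.length) :
    IsPath E (p.take (i+1)) a (p[i]'hi) := by
  have hlen : (p.take (i+1)).length = i + 1 := by simp [List.length_take]; omega
  refine mk_isPath (by intro hc; rw [hc] at hlen; simp at hlen) ?_ ?_ (h.2.2.2.take _)
  · rw [List.getElem_take]; exact head_eq h
  · rw [List.getElem_take]; congr 1; omega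

theorem isPath_drop (h : IsPath E p a b) {i : ℕ} (hi : i < p.length) :
    IsPath E (p.drop i) (p[i]'hi) b := by
  have hlen : (p.drop i).length = p.length - i := by simp
  refine mk_isPath ?_ ?_ ?_ (h.2.2.2.drop _)
  · intro hc; rw [hc] at hlen; simp at hlen; omega
  · rw [List.getElem_drop]; congr 1
  · rw [List.getElem_drop]; have := last_eq h; convert this using 2; omega

theorem isPath_append (h1 : IsPath E p a m) (h2 : IsPath E q c b) (e : E m c) :
    IsPath E (p ++ q) a b := by
  refine ⟨by simp [h1.1], ?_, ?_, ?_⟩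
  · rw [List.head?_append_of_ne_nil _ h1.1]; exact h1.2.1
  · rw [List.getLast?_append_of_ne_nil _ h2.1]; exact h2.2.2.1
  · change List.IsChain E (p ++ q); rw [List.isChain_append]
    refine ⟨h1.2.2.2, h2.2.2.2, ?_⟩
    intro x hx y hy
    rw [h1.2.2.1, Option.mem_some_iff] at hx
    rw [h2.2.1, Option.mem_some_iff] at hy
    rw [← hx, ← hy]; exact e

theorem isPath_glue (h1 : IsPath E p a m) (h2 : IsPath E q m b) :
    IsPath E (p ++ q.tail) a b := by
  rcases q with _ | ⟨x, t⟩
  · exact absurd rfl h2.1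
  · have hx : x = m := by simpa using h2.2.1
    rw [hx] at h2 ⊢
    rcases t with _ | ⟨y, t'⟩
    · have hb : m = b := by simpa using h2.2.2.1
      subst hb; simpa using h1
    · have hc := h2.2.2.2
      change List.IsChain E (m :: y :: t') at hc; rw [List.isChain_cons_cons] at hc
      refine isPath_append h1 ?_ hc.1
      exact ⟨by simp, rfl, by simpa using h2.2.2.1, hc.2⟩

theorem layer_getElem {layer : V → ℕ} (hE : ∀ u w, E u w → layer w = layer u + 1)
    (h : IsPath E p a b) {i : ℕ} (hi : i < p.length) : layer (p[i]'hi) = layer a + i := by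
  induction i with
  | zero => rw [head_eq h]; ring
  | succ n ih =>
      have hn : n < p.length := by omega
      rw [hE _ _ (chain'_getElem h.2.2.2 hi), ih hn]; omega

theorem layer_last {layer : V → ℕ} (hE : ∀ u w, E u w → layer w = layer u + 1)
    (h : IsPath E p a b) : layer b = layer a + (p.length - 1) := by
  have := layer_getElem hE h (i := p.length - 1) (by have := length_pos h; omega)
  rwa [last_eq h] at this


theorem mem_take {n : ℕ} {x : V} (h : x ∈ p.take n) :
    ∃ k, ∃ hk : k < p.length, k < n ∧ p[k]'hk = x := by
  obtain ⟨k, hk, hkeq⟩ := List.mem_iff_getElem.mp h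
  rw [List.length_take] at hk
  rw [List.getElem_take] at hkeq
  exact ⟨k, by omega, by omega, hkeq⟩

theorem mem_drop {n : ℕ} {x : V} (h : x ∈ p.drop n) :
    ∃ k, ∃ hk : k < p.length, n ≤ k ∧ p[k]'hk = x := by
  obtain ⟨k, hk, hkeq⟩ := List.mem_iff_getElem.mp h
  rw [List.length_drop] at hk
  rw [List.getElem_drop] at hkeq
  exact ⟨n + k, by omega, by omega, hkeq⟩

theorem take_mem {n k : ℕ} (hk : k < p.length) (h : k < n) : p[k]'hk ∈ p.take n := by
  have hlen : k < (p.take n).length := by simp [List.length_take]; omega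
  have : (p.take n)[k]'hlen = p[k]'hk := by rw [List.getElem_take]
  exact this ▸ List.getElem_mem hlen

theorem drop_mem {n k : ℕ} (hk : k < p.length) (h : n ≤ k) : p[k]'hk ∈ p.drop n := by
  have hlen : k - n < (p.drop n).length := by simp [List.length_drop]; omega
  have : (p.drop n)[k - n]'hlen = p[k]'hk := by rw [List.getElem_drop]; congr 1; omega
  exact this ▸ List.getElem_mem hlen

theorem mem_take_drop {i n : ℕ} {x : V} (h : x ∈ (p.drop i).take n) :
    ∃ k, ∃ hk : k < p.length, i ≤ k ∧ k < i + n ∧ p[k]'hk = x := by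
  obtain ⟨k, hk, hlt, heq⟩ := mem_take h
  rw [List.length_drop] at hk
  rw [List.getElem_drop] at heq
  exact ⟨i + k, by omega, by omega, by omega, heq⟩

theorem take_drop_mem {i n k : ℕ} (hk : k < p.length) (h1 : i ≤ k) (h2 : k < i + n) :
    p[k]'hk ∈ (p.drop i).take n := by
  have hlen : k - i < ((p.drop i).take n).length := by
    simp [List.length_take, List.length_drop]; omega
  have : ((p.drop i).take n)[k - i]'hlen = p[k]'hk := by
    rw [List.getElem_take, List.getElem_drop]; congr 1; omega
  exact this ▸ List.getElem_mem hlen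

theorem isPath_segment (h : IsPath E p a b) {i j : ℕ} (hij : i ≤ j) (hj : j < p.length) :
    IsPath E ((p.drop i).take (j - i + 1)) (p[i]'(by omega)) (p[j]'hj) := by
  have hi : i < p.length := by omega
  have hd := isPath_drop h hi
  have hlen : j - i < (p.drop i).length := by simp [List.length_drop]; omega
  have ht := isPath_take hd hlen
  rw [List.getElem_drop] at ht
  have hidx : p[i + (j - i)]'(by omega) = p[j]'hj := by congr 1; omega
  rwa [hidx] at ht

end PathAux

theorem statement5 {V : Type*} [Fintype V] [DecidableEq V]
    (N : TwoUnicastNetwork V)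
    (P11 P22 Ps2v1 Pvmv1 Ps1v2 : List V)
    (v0 v1 v2 v3 v4 v5 v6 vm : V)
    (hP11 : IsPath N.E P11 N.s1 N.d1)
    (hP22 : IsPath N.E P22 N.s2 N.d2)
    (hdisj : P11.Disjoint P22)
    (hNoMan : ∀ R1 R2 : List V, IsPath N.E R1 N.s1 N.d1 → IsPath N.E R2 N.s2 N.d2 →
      R1.Disjoint R2 → ¬ Manageable N R1 R2)
    (hn1 : 2 ≤ nInterf N Set.univ P11 N.s2)
    (hn1D : nDirect N P11 P22 N.s2 = 1)
    (hn2 : nInterf N Set.univ P22 N.s1 = 1)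
    (hn2D : nDirect N P22 P11 N.s1 = 0)
    (hv3P22 : v3 ∈ P22)
    (hv3unique : {v | InterferesOn N Set.univ P11 N.s2 v ∧ v ∈ P22} = {v3})
    (hv4P11 : v4 ∈ P11)
    (hv3v4 : N.E v3 v4)
    (hv3v4unique : ∀ w ∈ P11, N.E v3 w → w = v4)
    (hv1P11 : v1 ∉ P11)
    (hv1P22 : v1 ∉ P22)
    (hv1int : InterferesOn N Set.univ P11 N.s2 v1)
    (hPs2v1 : IsPath N.E Ps2v1 N.s2 v1)
    (hPs2v1disj : Ps2v1.Disjoint P11)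
    (hvmP22 : vm ∈ P22)
    (hvmPs2v1 : vm ∈ Ps2v1)
    (hvmlast : ∀ x ∈ Ps2v1, x ∈ P22 → Ps2v1.idxOf x ≤ Ps2v1.idxOf vm)
    (hPvmv1 : IsPath N.E Pvmv1 vm v1)
    (hPvmv1suffix : Pvmv1 <:+ Ps2v1)
    (hv2Pvmv1 : v2 ∈ Pvmv1)
    (hv2ne : v2 ≠ vm)
    (hv2unique : {v | InterferesOn N Set.univ P22 N.s1 v} = {v2})
    (hv0P22 : v0 ∈ P22)
    (hv2v0 : N.E v2 v0)
    (hv2v0unique : ∀ w ∈ P22, N.E v2 w → w = v0)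
    (hPs1v2 : IsPath N.E Ps1v2 N.s1 v2)
    (hPs1v2sub : ∀ x ∈ Ps1v2, x ∈ P11 ∨ x ∈ P22 ∨ x ∈ Pvmv1)
    (hv5P11 : v5 ∈ P11)
    (hv5mem : v5 ∈ Ps1v2)
    (hv5last : ∀ x ∈ Ps1v2, x ∈ P11 → Ps1v2.idxOf x ≤ Ps1v2.idxOf v5)
    (hv6succ : ∃ k : ℕ, Ps1v2[k]? = some v5 ∧ Ps1v2[k+1]? = some v6) :
    (∀ p : List V, IsPath N.E p N.s1 N.d2 → v0 ∈ p) ∧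
    (∀ p : List V, IsPath N.E p N.s2 N.d2 → v0 ∈ p) := by
  classical
  have hs2lay : N.layer N.s2 = 1 := (N.first_layer _).mpr (Or.inr rfl)
  have hs1lay : N.layer N.s1 = 1 := (N.first_layer _).mpr (Or.inl rfl)
  have hBlay : ∀ i (h : i < P22.length), N.layer (P22[i]'h) = 1 + i := by
    intro i h
    have := PathAux.layer_getElem N.edge_layer hP22 h
    rw [hs2lay] at this; omega
  have hBinj : ∀ i j (hi : i < P22.length) (hj : j < P22.length),
      P22[i]'hi = P22[j]'hj → i = j := by
    intro i j hi hj hEq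
    have h1 := hBlay i hi; have h2 := hBlay j hj
    rw [hEq] at h1; omega
  have hs1B : N.s1 ∉ P22 := by
    intro h
    obtain ⟨k, hk, hkeq⟩ := List.mem_iff_getElem.mp h
    have hkl := hBlay k hk
    rw [hkeq, hs1lay] at hkl
    have hk0 : k = 0 := by omega
    subst hk0
    have hh : P22[0]'hk = N.s2 := PathAux.head_eq hP22
    exact N.s_ne (by rw [← hkeq, hh])
  have hv2int : InterferesOn N Set.univ P22 N.s1 v2 := by
    have h : v2 ∈ ({v2} : Set V) := Set.mem_singleton v2
    rw [← hv2unique] at h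
    exact h
  obtain ⟨-, hv2nB, -, q0, hq0, -, hq0B⟩ := hv2int
  have hinterf : ∀ u w (q : List V), IsPath N.E q N.s1 u → (∀ x ∈ q, x ∉ P22) →
      w ∈ P22 → N.E u w → u = v2 ∧ w = v0 := by
    intro u w q hq hqB hwB e
    have huB : u ∉ P22 := hqB u (PathAux.mem_right hq)
    have hmem : u ∈ {v | InterferesOn N Set.univ P22 N.s1 v} :=
      ⟨Set.mem_univ _, huB, ⟨w, hwB, Set.mem_univ _, e⟩, q, hq, fun x _ => Set.mem_univ _, hqB⟩
    rw [hv2unique] at hmem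
    have hu2 : u = v2 := Set.mem_singleton_iff.mp hmem
    exact ⟨hu2, hv2v0unique w hwB (by rw [← hu2]; exact e)⟩
  have hcross : ∀ (q : List V) (x : V), IsPath N.E q N.s1 x → (∀ y ∈ q, y ∉ P22) ∨ v0 ∈ q := by
    intro q x hq
    by_cases hB : ∃ j, ∃ h : j < q.length, q[j]'h ∈ P22
    · right
      have hspec := Nat.find_spec hB
      have hmin := fun k (hk : k < Nat.find hB) => Nat.find_min hB hk
      set j := Nat.find hB with hjdef
      clear_value j
      obtain ⟨hjlen, hjB⟩ := hspec
      have hj0 : j ≠ 0 := by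
        intro h0
        subst h0
        have hh : q[0]'hjlen = N.s1 := PathAux.head_eq hq
        rw [hh] at hjB
        exact hs1B hjB
      obtain ⟨k, rfl⟩ : ∃ k, j = k + 1 := ⟨j - 1, by omega⟩
      have e : N.E (q[k]'(by omega)) (q[k+1]'hjlen) := PathAux.chain'_getElem hq.2.2.2 hjlen
      have hpre : IsPath N.E (q.take (k+1)) N.s1 (q[k]'(by omega)) :=
        PathAux.isPath_take hq (by omega)
      have hpreB : ∀ y ∈ q.take (k+1), y ∉ P22 := by
        intro y hy hyB
        obtain ⟨k', hk'len, hk'lt, hk'eq⟩ := PathAux.mem_take hy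
        exact hmin k' (by omega) ⟨hk'len, by rw [hk'eq]; exact hyB⟩
      have h2 := (hinterf _ _ _ hpre hpreB hjB e).2
      rw [← h2]
      exact List.getElem_mem _
    · left
      intro y hy hyB
      obtain ⟨k, hk, hkeq⟩ := List.mem_iff_getElem.mp hy
      exact hB ⟨k, hk, by rw [hkeq]; exact hyB⟩
  have goal1 : ∀ p : List V, IsPath N.E p N.s1 N.d2 → v0 ∈ p := by
    intro p hp
    rcases hcross p _ hp with h | h
    · exact absurd (PathAux.mem_right hP22) (h _ (PathAux.mem_right hp))
    · exact h
  refine ⟨goal1, ?_⟩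
  intro Q hQ
  by_contra hv0Q
  obtain ⟨i0, hi0len, hi0⟩ := List.mem_iff_getElem.mp hv0P22
  have hv0lay : N.layer v0 = 1 + i0 := by rw [← hi0]; exact hBlay i0 hi0len
  have hv2lay : N.layer v2 = i0 := by
    have := N.edge_layer v2 v0 hv2v0; omega
  have hQlay : ∀ i (h : i < Q.length), N.layer (Q[i]'h) = 1 + i := by
    intro i h
    have := PathAux.layer_getElem N.edge_layer hQ h
    rw [hs2lay] at this; omega
  have hQlen : Q.length = P22.length := by
    have h1 := PathAux.layer_last N.edge_layer hQ
    have h2 := PathAux.layer_last N.edge_layer hP22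
    have h3 := PathAux.length_pos hQ
    have h4 := PathAux.length_pos hP22
    rw [hs2lay] at h1 h2
    omega
  have hQeqB : ∀ j (hj : j < Q.length) (hj2 : j < P22.length),
      Q[j]'hj ∈ P22 → Q[j]'hj = P22[j]'hj2 := by
    intro j hj hj2 hmem
    obtain ⟨k, hk, hkeq⟩ := List.mem_iff_getElem.mp hmem
    have h1 := hBlay k hk
    rw [hkeq, hQlay j hj] at h1
    have hkj : k = j := by omega
    subst hkj
    exact hkeq.symm
  have hv0d2 : v0 ≠ N.d2 := by
    intro h
    exact hv0Q (by rw [h]; exact PathAux.mem_right hQ)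
  have hi0lt : i0 < P22.length - 1 := by
    rcases Nat.lt_or_ge i0 (P22.length - 1) with h | h
    · exact h
    · exfalso
      have hieq : i0 = P22.length - 1 := by omega
      apply hv0d2
      rw [← hi0]
      have := PathAux.last_eq hP22
      rw [← this]
      congr 1
  have hi0Q : ∀ h : i0 < Q.length, Q[i0]'h ∉ P22 := by
    intro h hmem
    have heq := hQeqB i0 h hi0len hmem
    rw [hi0] at heq
    exact hv0Q (by rw [← heq]; exact List.getElem_mem h)
  have hex : ∃ j, i0 < j ∧ ∃ h : j < Q.length, Q[j]'h ∈ P22 := by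
    refine ⟨Q.length - 1, by omega, by omega, ?_⟩
    have hh := PathAux.last_eq hQ
    rw [hh]
    exact PathAux.mem_right hP22
  obtain ⟨jc, hjci0, hjcQlen, hjcB, hjcmin⟩ :
      ∃ j, i0 < j ∧ ∃ h : j < Q.length, Q[j]'h ∈ P22 ∧
        ∀ k (hk : k < Q.length), i0 < k → k < j → Q[k]'hk ∉ P22 := by
    have hspec := Nat.find_spec hex
    have hmin := fun k (hk : k < Nat.find hex) => Nat.find_min hex hk
    obtain ⟨h1, h2, h3⟩ := hspec
    exact ⟨Nat.find hex, h1, h2, h3, fun k hk hik hkj hkB => hmin k hkj ⟨hik, hk, hkB⟩⟩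
  obtain ⟨jh, hjhQlen, hjhB, hjhi0, hjhmid⟩ :
      ∃ j, ∃ h : j < Q.length, Q[j]'h ∈ P22 ∧ j < i0 ∧
        ∀ k (hk : k < Q.length), j < k → k < jc → Q[k]'hk ∉ P22 := by
    have hP0 : ∃ h : 0 < Q.length, Q[0]'h ∈ P22 :=
      ⟨PathAux.length_pos hQ, by rw [PathAux.head_eq hQ]; exact PathAux.mem_left hP22⟩
    have hspec : ∃ h : Nat.findGreatest (fun j => ∃ h : j < Q.length, Q[j]'h ∈ P22) (jc - 1) < Q.length,
        Q[Nat.findGreatest (fun j => ∃ h : j < Q.length, Q[j]'h ∈ P22) (jc - 1)]'h ∈ P22 :=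
      Nat.findGreatest_spec (P := fun j => ∃ h : j < Q.length, Q[j]'h ∈ P22) (Nat.zero_le _) hP0
    have hle : Nat.findGreatest (fun j => ∃ h : j < Q.length, Q[j]'h ∈ P22) (jc - 1) ≤ jc - 1 :=
      Nat.findGreatest_le _
    have hgr := fun k (h1 : Nat.findGreatest (fun j => ∃ h : j < Q.length, Q[j]'h ∈ P22) (jc - 1) < k)
        (h2 : k ≤ jc - 1) => Nat.findGreatest_is_greatest h1 h2
    set jh := Nat.findGreatest (fun j => ∃ h : j < Q.length, Q[j]'h ∈ P22) (jc - 1) with hjh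
    clear_value jh
    obtain ⟨hlen, hBm⟩ := hspec
    have hmid : ∀ k (hk : k < Q.length), jh < k → k < jc → Q[k]'hk ∉ P22 := by
      intro k hk h1 h2 hkB
      exact hgr k h1 (by omega) ⟨hk, hkB⟩
    have hne_i0 : jh ≠ i0 := by
      intro h
      subst h
      exact hi0Q hlen hBm
    have hlt : jh < i0 := by
      rcases Nat.lt_or_ge jh i0 with h | h
      · exact h
      · exact absurd hBm (hjcmin jh hlen (by omega) (by omega))
    exact ⟨jh, hlen, hBm, hlt, hmid⟩
  obtain ⟨jb, rfl⟩ : ∃ m, jc = m + 1 := ⟨jc - 1, by omega⟩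
  -- abbreviations for frequently used bounds
  have hjbQ : jb < Q.length := by omega
  have hjhQ : jh < Q.length := hjhQlen
  -- RB : reachable from s1 avoiding P22
  have hRBstep : ∀ u w, (∃ q, IsPath N.E q N.s1 u ∧ ∀ x ∈ q, x ∉ P22) → N.E u w → w ∉ P22 →
      (∃ q, IsPath N.E q N.s1 w ∧ ∀ x ∈ q, x ∉ P22) := by
    rintro u w ⟨q, hq, hqB⟩ e hw
    refine ⟨q ++ [w], PathAux.isPath_append hq PathAux.isPath_singleton e, ?_⟩
    intro x hx
    rcases List.mem_append.mp hx with h | h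
    · exact hqB x h
    · rw [List.mem_singleton.mp h]; exact hw
  have hchainA : ∀ d k (hk : k < Q.length), jh < k → k + d = jb →
      (∃ q, IsPath N.E q N.s1 (Q[k]'hk) ∧ ∀ x ∈ q, x ∉ P22) → False := by
    intro d
    induction d with
    | zero =>
      intro k hk hjhk hkd hRBk
      have hkjb : k = jb := by omega
      subst hkjb
      obtain ⟨q, hq, hqB⟩ := hRBk
      have e : N.E (Q[k]'hk) (Q[k+1]'(by omega)) := PathAux.chain'_getElem hQ.2.2.2 (by omega)
      have h2 := (hinterf _ _ _ hq hqB hjcB e).1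
      have hl := hQlay k hk
      rw [h2, hv2lay] at hl
      omega
    | succ d ih =>
      intro k hk hjhk hkd hRBk
      have hk1 : k + 1 < Q.length := by omega
      apply ih (k+1) hk1 (by omega) (by omega)
      refine hRBstep _ _ hRBk (PathAux.chain'_getElem hQ.2.2.2 hk1) ?_
      exact hjhmid (k+1) hk1 (by omega) (by omega)
  have hchainA' : ∀ k (hk : k < Q.length), jh < k → k ≤ jb →
      (∃ q, IsPath N.E q N.s1 (Q[k]'hk) ∧ ∀ x ∈ q, x ∉ P22) → False :=
    fun k hk h1 h2 => hchainA (jb - k) k hk h1 (by omega)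
  have hQmidA : ∀ k (hk : k < Q.length), jh < k → k ≤ jb → Q[k]'hk ∉ P11 := by
    intro k hk h1 h2 hA
    obtain ⟨kA, hkA, hkAeq⟩ := List.mem_iff_getElem.mp hA
    apply hchainA' k hk h1 h2
    refine ⟨P11.take (kA+1), ?_, ?_⟩
    · have := PathAux.isPath_take hP11 hkA
      rwa [hkAeq] at this
    · intro x hx hxB
      obtain ⟨k', hk', hlt, heq⟩ := PathAux.mem_take hx
      exact hdisj (by rw [← heq]; exact List.getElem_mem hk') hxB
  -- M = Pvmv1 facts
  have hidx : ∀ y ∈ Ps2v1, N.layer y = 1 + Ps2v1.idxOf y := by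
    intro y hy
    have h1 : Ps2v1.idxOf y < Ps2v1.length := List.idxOf_lt_length_iff.mpr hy
    have h2 := PathAux.layer_getElem N.edge_layer hPs2v1 h1
    rw [List.getElem_idxOf h1] at h2
    rw [h2, hs2lay]
  have hMBvm : ∀ x ∈ Pvmv1, x ∈ P22 → x = vm := by
    intro x hxM hxB
    have hxP : x ∈ Ps2v1 := hPvmv1suffix.subset hxM
    have h1 := hidx x hxP
    have h2 := hidx vm hvmPs2v1
    have hle := hvmlast x hxP hxB
    obtain ⟨k, hk, hkeq⟩ := List.mem_iff_getElem.mp hxM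
    have h3 := PathAux.layer_getElem N.edge_layer hPvmv1 hk
    rw [hkeq] at h3
    have hvml := hidx vm hvmPs2v1
    have hxl : N.layer x ≤ N.layer vm := by omega
    have hk0 : k = 0 := by
      have h4 := hidx vm hvmPs2v1
      omega
    subst hk0
    rw [← hkeq]
    exact PathAux.head_eq hPvmv1
  obtain ⟨k2, hk2len, hk2eq⟩ := List.mem_iff_getElem.mp hv2Pvmv1
  have hk2pos : 0 < k2 := by
    rcases Nat.eq_zero_or_pos k2 with h | h
    · exfalso
      subst h
      exact hv2ne (by rw [← hk2eq, PathAux.head_eq hPvmv1])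
    · exact h
  have hvmlayv2 : N.layer vm + k2 = N.layer v2 := by
    have := PathAux.layer_getElem N.edge_layer hPvmv1 hk2len
    rw [hk2eq] at this
    omega
  have hvmlay : N.layer vm < i0 := by omega
  have hRBv1 : ∃ q, IsPath N.E q N.s1 v1 ∧ ∀ x ∈ q, x ∉ P22 := by
    have hdropPath : IsPath N.E (Pvmv1.drop k2) v2 v1 := by
      have := PathAux.isPath_drop hPvmv1 hk2len
      rwa [hk2eq] at this
    refine ⟨q0 ++ (Pvmv1.drop k2).tail, PathAux.isPath_glue hq0 hdropPath, ?_⟩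
    intro x hx
    rcases List.mem_append.mp hx with h | h
    · exact hq0B x h
    · have hxd : x ∈ Pvmv1.drop k2 := List.mem_of_mem_tail h
      obtain ⟨k', hk', hge, heq⟩ := PathAux.mem_drop hxd
      intro hxB
      have hxvm : x = vm := hMBvm x (by rw [← heq]; exact List.getElem_mem hk') hxB
      have h3 := PathAux.layer_getElem N.edge_layer hPvmv1 hk'
      rw [heq, hxvm] at h3
      omega
  have hv1Qmid : ∀ k (hk : k < Q.length), jh < k → k ≤ jb → Q[k]'hk ≠ v1 := by
    intro k hk h1 h2 heq
    apply hchainA' k hk h1 h2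
    rw [heq]
    exact hRBv1
  -- segment paths and R2
  have hjhB2 : jh < P22.length := by omega
  have hjcB2 : jb + 1 < P22.length := by omega
  have hBQjh : P22[jh]'hjhB2 = Q[jh]'hjhQlen := (hQeqB jh hjhQlen hjhB2 hjhB).symm
  have hBQjc : Q[jb+1]'hjcQlen = P22[jb+1]'hjcB2 := hQeqB (jb+1) hjcQlen hjcB2 hjcB
  have hseg1 : IsPath N.E (P22.take (jh+1)) N.s2 (Q[jh]'hjhQlen) := by
    have := PathAux.isPath_take hP22 hjhB2
    rwa [hBQjh] at this
  have hseg3 : IsPath N.E (P22.drop (jb+1)) (P22[jb+1]'hjcB2) N.d2 := PathAux.isPath_drop hP22 hjcB2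
  have e1 : N.E (Q[jh]'hjhQlen) (Q[jh+1]'(by omega)) := PathAux.chain'_getElem hQ.2.2.2 (by omega)
  have e2 : N.E (Q[jb]'hjbQ) (P22[jb+1]'hjcB2) := by
    have := PathAux.chain'_getElem hQ.2.2.2 (show jb+1 < Q.length from hjcQlen)
    rwa [hBQjc] at this
  have hQmidPath : IsPath N.E ((Q.drop (jh+1)).take (jb - (jh+1) + 1))
      (Q[jh+1]'(by omega)) (Q[jb]'hjbQ) := PathAux.isPath_segment hQ (by omega) hjbQ
  set R2 : List V := P22.take (jh+1) ++ ((Q.drop (jh+1)).take (jb - (jh+1) + 1) ++ P22.drop (jb+1))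
    with hR2def
  have hR2path : IsPath N.E R2 N.s2 N.d2 :=
    PathAux.isPath_append hseg1 (PathAux.isPath_append hQmidPath hseg3 e2) e1
  have hmemR2 : ∀ x ∈ R2, (∃ k, ∃ hk : k < P22.length, k ≤ jh ∧ P22[k]'hk = x) ∨
      (∃ k, ∃ hk : k < Q.length, jh < k ∧ k ≤ jb ∧ Q[k]'hk = x) ∨
      (∃ k, ∃ hk : k < P22.length, jb + 1 ≤ k ∧ P22[k]'hk = x) := by
    intro x hx
    rcases List.mem_append.mp hx with h | h
    · obtain ⟨k, hk, hlt, heq⟩ := PathAux.mem_take h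
      exact Or.inl ⟨k, hk, by omega, heq⟩
    rcases List.mem_append.mp h with h | h
    · obtain ⟨k, hk, h1', h2', heq⟩ := PathAux.mem_take_drop h
      exact Or.inr (Or.inl ⟨k, hk, by omega, by omega, heq⟩)
    · obtain ⟨k, hk, hge, heq⟩ := PathAux.mem_drop h
      exact Or.inr (Or.inr ⟨k, hk, by omega, heq⟩)
  have hseg1R2 : ∀ k (hk : k < P22.length), k ≤ jh → P22[k]'hk ∈ R2 := fun k hk h =>
    List.mem_append_left _ (PathAux.take_mem hk (by omega))
  have hQmidR2 : ∀ k (hk : k < Q.length), jh < k → k ≤ jb → Q[k]'hk ∈ R2 := fun k hk h1 h2 =>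
    List.mem_append_right _ (List.mem_append_left _ (PathAux.take_drop_mem hk (by omega) (by omega)))
  have hseg3R2 : ∀ k (hk : k < P22.length), jb + 1 ≤ k → P22[k]'hk ∈ R2 := fun k hk h =>
    List.mem_append_right _ (List.mem_append_right _ (PathAux.drop_mem hk h))
  have hv0R2 : v0 ∉ R2 := by
    intro h
    rcases hmemR2 v0 h with ⟨k, hk, hle, heq⟩ | ⟨k, hk, h1, h2, heq⟩ | ⟨k, hk, hge, heq⟩
    · have : k = i0 := hBinj k i0 hk hi0len (heq.trans hi0.symm)
      omega
    · exact hjhmid k hk h1 (by omega) (by rw [heq]; exact hv0P22)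
    · have : k = i0 := hBinj k i0 hk hi0len (heq.trans hi0.symm)
      omega
  have hR2A : ∀ x ∈ R2, x ∉ P11 := by
    intro x hx hxA
    rcases hmemR2 x hx with ⟨k, hk, hle, heq⟩ | ⟨k, hk, h1, h2, heq⟩ | ⟨k, hk, hge, heq⟩
    · exact hdisj hxA (by rw [← heq]; exact List.getElem_mem hk)
    · exact hQmidA k hk h1 h2 (by rw [heq]; exact hxA)
    · exact hdisj hxA (by rw [← heq]; exact List.getElem_mem hk)
  have hdisjR2 : P11.Disjoint R2 := fun a ha haR => hR2A a haR ha
  -- n2 = 0 lemma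
  have hN2 : ∀ S : Set V,
      (∀ x ∈ S, x ∈ P11 ∨ x ∈ R2 ∨ x ∈ Pvmv1 ∨ (x ∈ P22 ∧ N.layer x < 1 + i0)) →
      {v | InterferesOn N S R2 N.s1 v} = ∅ := by
    intro S hS
    ext u
    simp only [Set.mem_setOf_eq, Set.mem_empty_iff_false, iff_false]
    rintro ⟨huS, huR2, ⟨w, hwR2, hwS, e⟩, q, hq, hqS, hqR2⟩
    have hv0S : v0 ∉ S := by
      intro h
      rcases hS v0 h with h' | h' | h' | h'
      · exact hdisj h' hv0P22
      · exact hv0R2 h'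
      · have hveq := hMBvm v0 h' hv0P22
        have : N.layer v0 = N.layer vm := by rw [hveq]
        omega
      · omega
    have hqB : ∀ x ∈ q, x ∉ P22 := by
      rcases hcross q u hq with h | h
      · exact h
      · exact absurd (hqS v0 h) hv0S
    rcases hmemR2 w hwR2 with ⟨k, hk, hle, heq⟩ | ⟨k, hk, h1, h2, heq⟩ | ⟨k, hk, hge, heq⟩
    · have h2' := (hinterf u w q hq hqB (by rw [← heq]; exact List.getElem_mem hk) e).2
      exact hv0R2 (by rw [← h2']; exact hwR2)
    · refine hchainA' k hk h1 h2 ?_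
      have hwB : w ∉ P22 := by
        rw [← heq]
        exact hjhmid k hk h1 (by omega)
      have := hRBstep u w ⟨q, hq, hqB⟩ e hwB
      rw [heq]
      exact this
    · have h2' := (hinterf u w q hq hqB (by rw [← heq]; exact List.getElem_mem hk) e).2
      exact hv0R2 (by rw [← h2']; exact hwR2)
  -- v1 as interferer on P11
  obtain ⟨im, himlen, himeq⟩ := List.mem_iff_getElem.mp hvmP22
  have hseg1m : IsPath N.E (P22.take (im+1)) N.s2 vm := by
    have := PathAux.isPath_take hP22 himlen
    rwa [himeq] at this
  have hW1 : IsPath N.E (P22.take (im+1) ++ Pvmv1.tail) N.s2 v1 := PathAux.isPath_glue hseg1m hPvmv1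
  have hvmlayval : N.layer vm = 1 + im := by rw [← himeq]; exact hBlay im himlen
  have hW1S : ∀ x ∈ P22.take (im+1) ++ Pvmv1.tail, x ∈ Pvmv1 ∨ (x ∈ P22 ∧ N.layer x < 1 + i0) := by
    intro x hx
    rcases List.mem_append.mp hx with h | h
    · obtain ⟨k, hk, hlt, heq⟩ := PathAux.mem_take h
      right
      refine ⟨by rw [← heq]; exact List.getElem_mem hk, ?_⟩
      rw [← heq, hBlay k hk]
      omega
    · left
      exact List.mem_of_mem_tail h
  have hW1A : ∀ x ∈ P22.take (im+1) ++ Pvmv1.tail, x ∉ P11 := by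
    intro x hx hxA
    rcases hW1S x hx with h | h
    · exact hPs2v1disj (hPvmv1suffix.subset h) hxA
    · exact hdisj hxA h.1
  obtain ⟨-, -, ⟨wv1, hwv1, -, ev1⟩, -⟩ := hv1int
  have hv1interf : ∀ S : Set V, (∀ x ∈ P11, x ∈ S) → (∀ x ∈ Pvmv1, x ∈ S) →
      (∀ x ∈ P22, N.layer x < 1 + i0 → x ∈ S) → InterferesOn N S P11 N.s2 v1 := by
    intro S hSA hSM hSB
    refine ⟨hSM v1 (PathAux.mem_right hPvmv1), hv1P11, ⟨wv1, hwv1, hSA _ hwv1, ev1⟩,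
      P22.take (im+1) ++ Pvmv1.tail, hW1, ?_, hW1A⟩
    intro x hx
    rcases hW1S x hx with h | h
    · exact hSM x h
    · exact hSB x h.1 h.2
  obtain ⟨i3, hi3len, hi3eq⟩ := List.mem_iff_getElem.mp hv3P22
  have hdirect : ∀ u, u ∉ P11 → (∃ w ∈ P11, N.E u w) →
      ∀ k (hk : k < P22.length), P22[k]'hk = u → u = v3 := by
    intro u huA he k hk hkeq
    obtain ⟨w, hwA, e⟩ := he
    have hmem : u ∈ {v | InterferesOn N Set.univ P11 N.s2 v ∧ v ∈ P22} := by
      refine ⟨⟨Set.mem_univ _, huA, ⟨w, hwA, Set.mem_univ _, e⟩, P22.take (k+1), ?_,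
        fun x _ => Set.mem_univ _, ?_⟩, by rw [← hkeq]; exact List.getElem_mem hk⟩
      · have := PathAux.isPath_take hP22 hk
        rwa [hkeq] at this
      · intro x hx hxA
        obtain ⟨k', hk', hlt, heq⟩ := PathAux.mem_take hx
        exact hdisj hxA (by rw [← heq]; exact List.getElem_mem hk')
    rw [hv3unique] at hmem
    exact Set.mem_singleton_iff.mp hmem
  have hzero : ∀ (S : Set V) (R : List V) (s : V), {v | InterferesOn N S R s v} = ∅ →
      nInterf N S R s ≠ 1 := by
    intro S R s h
    unfold nInterf
    rw [h, Set.ncard_empty]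
    omega
  have hne1of2 : ∀ (S : Set V) (t : V), v1 ≠ t → InterferesOn N S P11 N.s2 v1 →
      InterferesOn N S P11 N.s2 t → nInterf N S P11 N.s2 ≠ 1 := by
    intro S t hne h1 h2
    have hsub : ({v1, t} : Set V) ⊆ {v | InterferesOn N S P11 N.s2 v} := by
      intro x hx
      simp only [Set.mem_insert_iff, Set.mem_singleton_iff] at hx
      rcases hx with rfl | rfl
      · exact h1
      · exact h2
    have h2le : 2 ≤ nInterf N S P11 N.s2 := by
      have hcard := Set.ncard_le_ncard hsub (Set.toFinite _)
      rwa [Set.ncard_pair hne] at hcard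
    omega
  apply hNoMan P11 R2 hP11 hR2path hdisjR2
  by_cases hcaseI : ∃ k, ∃ hk : k < Q.length, jh < k ∧ k ≤ jb ∧ ∃ w ∈ P11, N.E (Q[k]'hk) w
  · -- case (i): some middle node of Q has an edge into P11
    obtain ⟨jt, hjt, hjt1, hjt2, wt, hwtA, et⟩ := hcaseI
    refine ⟨{x | x ∈ P11 ∨ x ∈ R2 ∨ x ∈ Pvmv1 ∨ (x ∈ P22 ∧ N.layer x < 1 + i0)},
      fun x hx => Or.inl hx, fun x hx => Or.inr (Or.inl hx), ?_,
      hzero _ R2 N.s1 (hN2 _ (fun x hx => hx))⟩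
    refine hne1of2 _ (Q[jt]'hjt) (Ne.symm (hv1Qmid jt hjt hjt1 hjt2))
      (hv1interf _ (fun x hx => Or.inl hx) (fun x hx => Or.inr (Or.inr (Or.inl hx)))
        (fun x hx hl => Or.inr (Or.inr (Or.inr ⟨hx, hl⟩)))) ?_
    refine ⟨Or.inr (Or.inl (hQmidR2 jt hjt hjt1 hjt2)), hQmidA jt hjt hjt1 hjt2,
      ⟨wt, hwtA, Or.inl hwtA, et⟩,
      P22.take (jh+1) ++ (Q.drop (jh+1)).take (jt - (jh+1) + 1),
      PathAux.isPath_append hseg1 (PathAux.isPath_segment hQ (by omega) hjt) e1, ?_, ?_⟩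
    · intro x hx
      rcases List.mem_append.mp hx with h | h
      · obtain ⟨k, hk, hlt, heq⟩ := PathAux.mem_take h
        exact Or.inr (Or.inl (by rw [← heq]; exact hseg1R2 k hk (by omega)))
      · obtain ⟨k, hk, h1', h2', heq⟩ := PathAux.mem_take_drop h
        exact Or.inr (Or.inl (by rw [← heq]; exact hQmidR2 k hk (by omega) (by omega)))
    · intro x hx hxA
      rcases List.mem_append.mp hx with h | h
      · obtain ⟨k, hk, hlt, heq⟩ := PathAux.mem_take h
        exact hdisj hxA (by rw [← heq]; exact List.getElem_mem hk)
      · obtain ⟨k, hk, h1', h2', heq⟩ := PathAux.mem_take_drop h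
        exact hQmidA k hk (by omega) (by omega) (by rw [heq]; exact hxA)
  · -- case (ii): no middle node of Q has an edge into P11
    have hnoA : ∀ k (hk : k < Q.length), jh < k → k ≤ jb → ∀ w ∈ P11, ¬ N.E (Q[k]'hk) w := by
      intro k hk h1 h2 w hw e
      exact hcaseI ⟨k, hk, h1, h2, w, hw, e⟩
    by_cases hc3 : i0 ≤ i3 ∧ i3 ≤ jb
    · -- v3 lies in the bypassed part of P22 : use S = P11 ∪ R2, both counts are 0
      refine ⟨{x | x ∈ P11 ∨ x ∈ R2}, fun x hx => Or.inl hx, fun x hx => Or.inr hx, ?_,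
        hzero _ R2 N.s1 (hN2 _ (fun x hx => by
          rcases hx with h | h
          · exact Or.inl h
          · exact Or.inr (Or.inl h)))⟩
      apply hzero
      ext u
      simp only [Set.mem_setOf_eq, Set.mem_empty_iff_false, iff_false]
      rintro ⟨huS, huA, ⟨w, hwA, hwS, e⟩, q, hq, hqS, hqA⟩
      rcases huS with h | h
      · exact huA h
      rcases hmemR2 u h with ⟨k, hk, hle, heq⟩ | ⟨k, hk, h1, h2, heq⟩ | ⟨k, hk, hge, heq⟩
      · have hu3 : u = v3 := hdirect u huA ⟨w, hwA, e⟩ k hk heq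
        have hk3 : k = i3 := hBinj k i3 hk hi3len (by rw [heq, hu3, hi3eq])
        omega
      · have he' : N.E (Q[k]'hk) w := by rw [heq]; exact e
        exact hnoA k hk h1 h2 w hwA he'
      · have hu3 : u = v3 := hdirect u huA ⟨w, hwA, e⟩ k hk heq
        have hk3 : k = i3 := hBinj k i3 hk hi3len (by rw [heq, hu3, hi3eq])
        omega
    · -- v3 is either early (layer < L0) or in the tail of R2
      refine ⟨{x | x ∈ P11 ∨ x ∈ R2 ∨ x ∈ Pvmv1 ∨ (x ∈ P22 ∧ N.layer x < 1 + i0)},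
        fun x hx => Or.inl hx, fun x hx => Or.inr (Or.inl hx), ?_,
        hzero _ R2 N.s1 (hN2 _ (fun x hx => hx))⟩
      have hv1v3 : v1 ≠ v3 := by
        intro h
        exact hv1P22 (by rw [h]; exact hv3P22)
      refine hne1of2 _ v3 hv1v3
        (hv1interf _ (fun x hx => Or.inl hx) (fun x hx => Or.inr (Or.inr (Or.inl hx)))
          (fun x hx hl => Or.inr (Or.inr (Or.inr ⟨hx, hl⟩)))) ?_
      have hv3A : v3 ∉ P11 := fun h => hdisj h hv3P22
      rcases Nat.lt_or_ge i3 i0 with hlt3 | hge3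
      · -- early case : witness path along P22 up to v3
        refine ⟨Or.inr (Or.inr (Or.inr ⟨hv3P22, by rw [← hi3eq, hBlay i3 hi3len]; omega⟩)),
          hv3A, ⟨v4, hv4P11, Or.inl hv4P11, hv3v4⟩, P22.take (i3+1), ?_, ?_, ?_⟩
        · have := PathAux.isPath_take hP22 hi3len
          rwa [hi3eq] at this
        · intro x hx
          obtain ⟨k, hk, hklt, heq⟩ := PathAux.mem_take hx
          exact Or.inr (Or.inr (Or.inr ⟨by rw [← heq]; exact List.getElem_mem hk,
            by rw [← heq, hBlay k hk]; omega⟩))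
        · intro x hx hxA
          obtain ⟨k, hk, hklt, heq⟩ := PathAux.mem_take hx
          exact hdisj hxA (by rw [← heq]; exact List.getElem_mem hk)
      · -- tail case : i3 ≥ jb + 1, witness path along R2 up to v3
        have hi3jb : jb + 1 ≤ i3 := by
          by_contra h
          exact hc3 ⟨hge3, by omega⟩
        refine ⟨Or.inr (Or.inl (by rw [← hi3eq]; exact hseg3R2 i3 hi3len hi3jb)), hv3A,
          ⟨v4, hv4P11, Or.inl hv4P11, hv3v4⟩,
          P22.take (jh+1) ++ ((Q.drop (jh+1)).take (jb - (jh+1) + 1) ++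
            (P22.drop (jb+1)).take (i3 - (jb+1) + 1)), ?_, ?_, ?_⟩
        · have hsegB := PathAux.isPath_segment hP22 (show jb+1 ≤ i3 by omega) hi3len
          have := PathAux.isPath_append hseg1 (PathAux.isPath_append hQmidPath hsegB e2) e1
          rwa [hi3eq] at this
        · intro x hx
          rcases List.mem_append.mp hx with h | h
          · obtain ⟨k, hk, hklt, heq⟩ := PathAux.mem_take h
            exact Or.inr (Or.inl (by rw [← heq]; exact hseg1R2 k hk (by omega)))
          rcases List.mem_append.mp h with h | h
          · obtain ⟨k, hk, h1', h2', heq⟩ := PathAux.mem_take_drop h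
            exact Or.inr (Or.inl (by rw [← heq]; exact hQmidR2 k hk (by omega) (by omega)))
          · obtain ⟨k, hk, h1', h2', heq⟩ := PathAux.mem_take_drop h
            exact Or.inr (Or.inl (by rw [← heq]; exact hseg3R2 k hk (by omega)))
        · intro x hx hxA
          rcases List.mem_append.mp hx with h | h
          · obtain ⟨k, hk, hklt, heq⟩ := PathAux.mem_take h
            exact hdisj hxA (by rw [← heq]; exact List.getElem_mem hk)
          rcases List.mem_append.mp h with h | h
          · obtain ⟨k, hk, h1', h2', heq⟩ := PathAux.mem_take_drop h
            exact hQmidA k hk (by omega) (by omega) (by rw [heq]; exact hxA)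
          · obtain ⟨k, hk, h1', h2', heq⟩ := PathAux.mem_take_drop h
            exact hdisj hxA (by rw [← heq]; exact List.getElem_mem hk)
end

section
/- Under the Case-C1 setup, the removal of v_5 disconnects s_1 from both destinations; that is, every path from s_1 to d_1 contains v_5 and every path from s_1 to d_2 contains v_5. -/
open List

namespace PfAux
open List

variable {V : Type*}

theorem head_getElem {E : V → V → Prop} {p : List V} {u w : V} (h : IsPath E p u w)
    (hl : 0 < p.length) : p[0] = u := by
  obtain ⟨hne, hh, -, -⟩ := h
  cases p with
  | nil => simp at hl
  | cons a t => simpa using hh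

theorem mem_head {E : V → V → Prop} {p : List V} {u w : V} (h : IsPath E p u w) : u ∈ p := by
  have hl : 0 < p.length := List.length_pos_iff.mpr h.1
  have := head_getElem h hl
  exact this ▸ List.getElem_mem hl

theorem getLast_getElem {E : V → V → Prop} {p : List V} {u w : V} (h : IsPath E p u w) :
    ∀ hl : 0 < p.length, p[p.length - 1] = w := by
  intro hl
  obtain ⟨hne, -, hg, -⟩ := h
  rw [List.getLast?_eq_getLast hne] at hg
  rw [← List.getLast_eq_getElem hne]
  exact Option.some_injective _ hg

theorem mem_getLast {E : V → V → Prop} {p : List V} {u w : V} (h : IsPath E p u w) : w ∈ p := by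
  have hl : 0 < p.length := List.length_pos_iff.mpr h.1
  have := getLast_getElem h hl
  exact this ▸ List.getElem_mem (by omega)

theorem path_edge {E : V → V → Prop} {p : List V} {u w : V} (h : IsPath E p u w)
    {i : ℕ} (hi : i + 1 < p.length) : E p[i] p[i+1] := by
  have hc : List.IsChain E p := h.2.2.2
  rw [List.isChain_iff_getElem] at hc
  exact hc i (by omega)

theorem path_take {E : V → V → Prop} {p : List V} {u w : V} (h : IsPath E p u w)
    {i : ℕ} (hi : i < p.length) : IsPath E (p.take (i+1)) u p[i] := by
  have hlen : (p.take (i+1)).length = i + 1 := by simp; omega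
  refine ⟨by intro hc; rw [hc] at hlen; simp at hlen, ?_, ?_, ?_⟩
  · have h0 : 0 < (p.take (i+1)).length := by omega
    rw [List.head?_eq_getElem?, List.getElem?_eq_getElem h0]
    congr 1
    rw [List.getElem_take]
    exact head_getElem h (by omega)
  · have hne : p.take (i+1) ≠ [] := by intro hc; rw [hc] at hlen; simp at hlen
    rw [List.getLast?_eq_getLast hne, List.getLast_eq_getElem]
    congr 1
    rw [List.getElem_take]
    · simp [hlen]
  · exact h.2.2.2.take _

theorem path_drop {E : V → V → Prop} {p : List V} {u w : V} (h : IsPath E p u w)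
    {i : ℕ} (hi : i < p.length) : IsPath E (p.drop i) p[i] w := by
  have hlen : (p.drop i).length = p.length - i := by simp
  refine ⟨by intro hc; rw [hc] at hlen; simp at hlen; omega, ?_, ?_, ?_⟩
  · have h0 : 0 < (p.drop i).length := by omega
    rw [List.head?_eq_getElem?, List.getElem?_eq_getElem h0]
    congr 1
    rw [List.getElem_drop]
    simp
  · have hne : p.drop i ≠ [] := by
      intro hc; rw [hc] at hlen; simp at hlen; omega
    rw [List.getLast?_eq_getLast hne, List.getLast_eq_getElem]
    have : (p.drop i)[(p.drop i).length - 1] = p[i + ((p.length - i) - 1)] := by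
      rw [List.getElem_drop]; congr 1; omega
    rw [this]
    have h2 : p[i + (p.length - i - 1)] = p[p.length - 1]'(by omega) := by
      congr 1
      omega
    rw [h2]
    exact congrArg some (getLast_getElem h (by omega))
  · exact h.2.2.2.drop _

theorem path_append_edge {E : V → V → Prop} {q q' : List V} {a b c d : V}
    (h1 : IsPath E q a b) (h2 : IsPath E q' c d) (hbc : E b c) :
    IsPath E (q ++ q') a d := by
  obtain ⟨hne1, hh1, hg1, hc1⟩ := h1
  obtain ⟨hne2, hh2, hg2, hc2⟩ := h2
  refine ⟨by simp [hne1], ?_, ?_, ?_⟩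
  · rwa [List.head?_append_of_ne_nil _ hne1]
  · rwa [List.getLast?_append_of_ne_nil _ hne2]
  · refine hc1.append hc2 ?_
    intro x hx y hy
    rw [hg1] at hx; rw [hh2] at hy
    simp at hx hy
    rw [← hx, ← hy]; exact hbc

theorem path_append_shared {E : V → V → Prop} {q q' : List V} {a b d : V}
    (h1 : IsPath E q a b) (h2 : IsPath E q' b d) :
    IsPath E (q ++ q'.tail) a d := by
  obtain ⟨hne2, hh2, hg2, hc2⟩ := h2
  cases q' with
  | nil => simp at hne2
  | cons x t =>
    have hx : x = b := by simpa using hh2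
    cases t with
    | nil =>
      have hd : x = d := by simpa using hg2
      have hbd : b = d := by rw [← hx, hd]
      simpa [← hbd] using h1
    | cons y t' =>
      have hedge : E x y := by
        have : List.IsChain E (x :: y :: t') := hc2; rw [List.isChain_cons] at this
        exact this.1 y rfl
      have h1' : IsPath E q a x := by rw [hx]; exact h1
      refine path_append_edge h1' ⟨by simp, rfl, ?_, ?_⟩ hedge
      · rw [← hg2]; exact (List.getLast?_cons_cons ..).symm
      · exact (List.isChain_cons.mp (hc2 : List.IsChain E (x :: y :: t'))).2

end PfAux

namespace PfAux
open List

variable {V : Type*}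

theorem mem_idx {p : List V} {x : V} (hx : x ∈ p) : ∃ i, ∃ h : i < p.length, p[i] = x :=
  List.mem_iff_getElem.mp hx

theorem idx_mem {p : List V} {i : ℕ} (h : i < p.length) : p[i] ∈ p := List.getElem_mem h

variable [Fintype V] {N : TwoUnicastNetwork V}

theorem path_layer {p : List V} {u w : V} (h : IsPath N.E p u w) :
    ∀ i, ∀ hi : i < p.length, N.layer p[i] = N.layer u + i := by
  intro i
  induction i with
  | zero => intro hi; rw [head_getElem h hi]; omega
  | succ n ih =>
    intro hi
    have hn := ih (by omega)
    have he := path_edge h hi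
    rw [N.edge_layer _ _ he, hn]; omega

theorem path_nodup {p : List V} {u w : V} (h : IsPath N.E p u w) : p.Nodup := by
  rw [List.nodup_iff_injective_get]
  intro ⟨i, hi⟩ ⟨j, hj⟩ hij
  simp only [List.get_eq_getElem] at hij
  have h1 := path_layer h i hi
  have h2 := path_layer h j hj
  rw [hij, h2] at h1
  simp only [Fin.mk.injEq]
  omega

theorem path_layer_mem {p : List V} {u w : V} (h : IsPath N.E p u w) {x : V} (hx : x ∈ p) :
    ∃ i, ∃ hi : i < p.length, p[i] = x ∧ N.layer x = N.layer u + i := by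
  obtain ⟨i, hi, hptr⟩ := mem_idx hx
  exact ⟨i, hi, hptr, by rw [← hptr]; exact path_layer h i hi⟩

theorem nodup_indexOf [DecidableEq V] {p : List V} (hnd : p.Nodup) {i : ℕ}
    (hi : i < p.length) : p.idxOf p[i] = i := by
  have hmem : p[i] ∈ p := idx_mem hi
  have hlt : p.idxOf p[i] < p.length := List.idxOf_lt_length_iff.mpr hmem
  have hget : p[p.idxOf p[i]] = p[i] := List.getElem_idxOf hlt
  rw [List.nodup_iff_injective_get] at hnd
  have := hnd (a₁ := ⟨p.idxOf p[i], hlt⟩) (a₂ := ⟨i, hi⟩) (by simpa using hget)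
  simpa using congrArg Fin.val this

/-- the segment of a path from index i to index j -/
theorem path_segment {p : List V} {u w : V} (h : IsPath N.E p u w) {i j : ℕ}
    (hij : i ≤ j) (hj : j < p.length) :
    IsPath N.E ((p.drop i).take (j - i + 1)) p[i] p[j] := by
  have hd := path_drop h (i := i) (by omega)
  have hlen : j - i < (p.drop i).length := by simp; omega
  have ht := path_take hd hlen
  have : (p.drop i)[j - i] = p[j] := by
    rw [List.getElem_drop]; congr 1; omega
  rwa [this] at ht

theorem first_entry {p : List V} {a b : V} (T : V → Prop) [DecidablePred T]
    (hp : IsPath N.E p a b) (ha : ¬ T a) {x0 : V} (hx0 : x0 ∈ p) (hTx0 : T x0) :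
    ∃ i, ∃ hi : i + 1 < p.length, ¬ T p[i] ∧ T p[i+1] ∧
      IsPath N.E (p.take (i+1)) a p[i] ∧ (∀ n ∈ p.take (i+1), ¬ T n) := by
  obtain ⟨j0, hj0, hj0x⟩ := mem_idx hx0
  have hex : ∃ k, k < p.length ∧ T (p.getD k x0) := by
    refine ⟨j0, hj0, ?_⟩
    rw [List.getD_eq_getElem _ _ hj0, hj0x]
    exact hTx0
  classical
  let k := Nat.find hex
  obtain ⟨hklt, hkT⟩ : k < p.length ∧ T (p.getD k x0) := Nat.find_spec hex
  have hkpos : 0 < k := by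
    rcases Nat.eq_zero_or_pos k with h0 | h0
    · exfalso
      rw [h0] at hkT hklt
      rw [List.getD_eq_getElem _ _ hklt, head_getElem hp hklt] at hkT
      exact ha hkT
    · exact h0
  have hmin : ∀ m, m < k → ¬ (m < p.length ∧ T (p.getD m x0)) := fun m hm => Nat.find_min hex hm
  refine ⟨k - 1, by omega, ?_, ?_, ?_, ?_⟩
  · have := hmin (k-1) (by omega)
    push_neg at this
    have h2 := this (by omega)
    rwa [List.getD_eq_getElem _ _ (by omega : k - 1 < p.length)] at h2
  · have hk2 : T (p[k]'hklt) := by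
      rwa [List.getD_eq_getElem _ _ hklt] at hkT
    have : p[k-1+1]'(by omega) = p[k]'hklt := by congr 1; omega
    rwa [this]
  · exact path_take hp (by omega)
  · intro n hn
    have hlen : (p.take (k-1+1)).length = k - 1 + 1 := by simp; omega
    obtain ⟨m, hm, hmn⟩ := mem_idx hn
    rw [hlen] at hm
    have : (p.take (k-1+1))[m]'(by rw[hlen]; omega) = p[m]'(by omega) := List.getElem_take
    rw [this] at hmn
    have h3 := hmin m (by omega)
    push_neg at h3
    have h4 := h3 (by omega)
    rw [List.getD_eq_getElem _ _ (by omega : m < p.length), hmn] at h4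
    exact h4

theorem interferes_mono {S S' : Set V} (hss : S ⊆ S') {Ri : List V} {src v : V}
    (h : InterferesOn N S Ri src v) : InterferesOn N S' Ri src v := by
  obtain ⟨h1, h2, ⟨w, hw1, hw2, hw3⟩, q, hq1, hq2, hq3⟩ := h
  exact ⟨hss h1, h2, ⟨w, hw1, hss hw2, hw3⟩, q, hq1, fun x hx => hss (hq2 x hx), hq3⟩

end PfAux

namespace PfAux
open List

variable {V : Type*}

theorem mem_take_idx {p : List V} {n : ℕ} {x : V} (h : x ∈ p.take n) :
    ∃ m, ∃ hm : m < p.length, m < n ∧ p[m] = x := by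
  obtain ⟨m, hm, hg⟩ := mem_idx h
  have hlen : (p.take n).length = min n p.length := by simp
  rw [hlen] at hm
  have h2 : (p.take n)[m]'(by omega) = p[m]'(by omega) := List.getElem_take
  exact ⟨m, by omega, by omega, by rw [← h2, hg]⟩

theorem mem_seg_idx {p : List V} {i n : ℕ} {x : V} (h : x ∈ (p.drop i).take n) :
    ∃ m, ∃ hm : i + m < p.length, m < n ∧ p[i+m] = x := by
  obtain ⟨m, hm, hlt, hg⟩ := mem_take_idx h
  have hlen : (p.drop i).length = p.length - i := by simp
  rw [hlen] at hm
  have h2 : (p.drop i)[m]'(by omega) = p[i+m]'(by omega) := List.getElem_drop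
  exact ⟨m, by omega, hlt, by rw [← h2, hg]⟩

theorem mem_tail_take {p : List V} {i j : ℕ} (h1 : 1 ≤ i) (h2 : i ≤ j) (hjlt : j < p.length) :
    p[i]'(by omega) ∈ (p.take (j+1)).tail := by
  have hlen : ((p.take (j+1)).tail).length = j := by simp; omega
  have hget : ((p.take (j+1)).tail)[i-1]'(by omega) = p[i]'(by omega) := by
    rw [List.getElem_tail]
    have : (p.take (j+1))[i-1+1]'(by simp; omega) = p[i-1+1]'(by omega) := List.getElem_take
    rw [this]
    congr 1
    omega
  rw [← hget]; exact idx_mem (by omega)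

variable [Fintype V] {N : TwoUnicastNetwork V}

theorem path_getElem_inj {p : List V} {u w : V} (h : IsPath N.E p u w) {i j : ℕ}
    (hi : i < p.length) (hj : j < p.length) (heq : p[i] = p[j]) : i = j := by
  have h1 := path_layer h i hi
  have h2 := path_layer h j hj
  rw [heq, h2] at h1
  omega

end PfAux

namespace PfAux
open List
variable {V : Type*}

theorem suffix_getElem {p q : List V} (h : p <:+ q) {i : ℕ} (hi : i < p.length) :
    ∃ hj : q.length - p.length + i < q.length, q[q.length - p.length + i] = p[i] := by
  obtain ⟨pre, rfl⟩ := h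
  have hlen : (pre ++ p).length = pre.length + p.length := by simp
  refine ⟨by omega, ?_⟩
  have h2 : (pre ++ p)[(pre ++ p).length - p.length + i]'(by omega)
      = (pre ++ p)[pre.length + i]'(by omega) := by congr 1; omega
  rw [h2, List.getElem_append_right (by omega)]
  congr 1
  omega
end PfAux
theorem statement6 {V : Type*} [Fintype V] [DecidableEq V]
    (N : TwoUnicastNetwork V)
    (P11 P22 Ps2v1 Pvmv1 Ps1v2 : List V)
    (v0 v1 v2 v3 v4 v5 v6 vm : V)
    (hP11 : IsPath N.E P11 N.s1 N.d1)
    (hP22 : IsPath N.E P22 N.s2 N.d2)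
    (hdisj : P11.Disjoint P22)
    (hNoMan : ∀ R1 R2 : List V, IsPath N.E R1 N.s1 N.d1 → IsPath N.E R2 N.s2 N.d2 →
      R1.Disjoint R2 → ¬ Manageable N R1 R2)
    (hn1 : 2 ≤ nInterf N Set.univ P11 N.s2)
    (hn1D : nDirect N P11 P22 N.s2 = 1)
    (hn2 : nInterf N Set.univ P22 N.s1 = 1)
    (hn2D : nDirect N P22 P11 N.s1 = 0)
    (hv3P22 : v3 ∈ P22)
    (hv3unique : {v | InterferesOn N Set.univ P11 N.s2 v ∧ v ∈ P22} = {v3})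
    (hv4P11 : v4 ∈ P11)
    (hv3v4 : N.E v3 v4)
    (hv3v4unique : ∀ w ∈ P11, N.E v3 w → w = v4)
    (hv1P11 : v1 ∉ P11)
    (hv1P22 : v1 ∉ P22)
    (hv1int : InterferesOn N Set.univ P11 N.s2 v1)
    (hPs2v1 : IsPath N.E Ps2v1 N.s2 v1)
    (hPs2v1disj : Ps2v1.Disjoint P11)
    (hvmP22 : vm ∈ P22)
    (hvmPs2v1 : vm ∈ Ps2v1)
    (hvmlast : ∀ x ∈ Ps2v1, x ∈ P22 → Ps2v1.idxOf x ≤ Ps2v1.idxOf vm)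
    (hPvmv1 : IsPath N.E Pvmv1 vm v1)
    (hPvmv1suffix : Pvmv1 <:+ Ps2v1)
    (hv2Pvmv1 : v2 ∈ Pvmv1)
    (hv2ne : v2 ≠ vm)
    (hv2unique : {v | InterferesOn N Set.univ P22 N.s1 v} = {v2})
    (hv0P22 : v0 ∈ P22)
    (hv2v0 : N.E v2 v0)
    (hv2v0unique : ∀ w ∈ P22, N.E v2 w → w = v0)
    (hPs1v2 : IsPath N.E Ps1v2 N.s1 v2)
    (hPs1v2sub : ∀ x ∈ Ps1v2, x ∈ P11 ∨ x ∈ P22 ∨ x ∈ Pvmv1)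
    (hv5P11 : v5 ∈ P11)
    (hv5mem : v5 ∈ Ps1v2)
    (hv5last : ∀ x ∈ Ps1v2, x ∈ P11 → Ps1v2.idxOf x ≤ Ps1v2.idxOf v5)
    (hv6succ : ∃ k : ℕ, Ps1v2[k]? = some v5 ∧ Ps1v2[k+1]? = some v6) :
    (∀ p : List V, IsPath N.E p N.s1 N.d1 → v5 ∈ p) ∧
    (∀ p : List V, IsPath N.E p N.s1 N.d2 → v5 ∈ p) := by
  classical
  have hP11ne := hP11.1
  have hs1P11 : N.s1 ∈ P11 := PfAux.mem_head hP11
  have hd1P11 : N.d1 ∈ P11 := PfAux.mem_getLast hP11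
  have hs2P22 : N.s2 ∈ P22 := PfAux.mem_head hP22
  have hd2P22 : N.d2 ∈ P22 := PfAux.mem_getLast hP22
  have hs1nP22 : N.s1 ∉ P22 := hdisj hs1P11
  have hPvm_sub : ∀ x ∈ Pvmv1, x ∈ Ps2v1 := fun x hx => hPvmv1suffix.subset hx
  have hPvm_nP11 : ∀ x ∈ Pvmv1, x ∉ P11 := fun x hx => hPs2v1disj (hPvm_sub x hx)
  have hv5nP22 : v5 ∉ P22 := hdisj hv5P11
  have hv5nPvm : v5 ∉ Pvmv1 := fun h => hPvm_nP11 v5 h hv5P11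
  have hndPs1v2 := PfAux.path_nodup hPs1v2
  have hndPvm := PfAux.path_nodup hPvmv1
  have hndPs2v1 := PfAux.path_nodup hPs2v1
  -- v2 interferes on P22, and is the unique such node
  have hv2int : InterferesOn N Set.univ P22 N.s1 v2 := by
    have h : v2 ∈ {v | InterferesOn N Set.univ P22 N.s1 v} := by rw [hv2unique]; rfl
    exact h
  have hv2nP22 : v2 ∉ P22 := hv2int.2.1
  have huniq2 : ∀ x, InterferesOn N Set.univ P22 N.s1 x → x = v2 := by
    intro x hx
    have h : x ∈ ({v2} : Set V) := by rw [← hv2unique]; exact hx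
    simpa using h
  -- indices for v5, v6 on Ps1v2
  obtain ⟨k, hk5, hk6⟩ := hv6succ
  obtain ⟨hklt1, hgetk1⟩ : ∃ h : k + 1 < Ps1v2.length, Ps1v2[k+1] = v6 := by
    have := List.getElem?_eq_some_iff.mp hk6
    exact this
  have hklt : k < Ps1v2.length := by omega
  have hgetk : Ps1v2[k] = v5 := by
    have := List.getElem?_eq_some_iff.mp hk5
    obtain ⟨h, hh⟩ := this
    exact hh
  have hv5v6E : N.E v5 v6 := by
    have := PfAux.path_edge hPs1v2 hklt1
    rwa [hgetk, hgetk1] at this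
  have hv6mem : v6 ∈ Ps1v2 := hgetk1 ▸ PfAux.idx_mem hklt1
  -- Ps1v2 avoids P22
  have hPs1v2nP22 : ∀ x ∈ Ps1v2, x ∉ P22 := by
    intro x0 hx0m hx0T
    obtain ⟨i, hi, hTi, hTi1, hqpath, hqavoid⟩ :=
      PfAux.first_entry (T := fun z => z ∈ P22) hPs1v2 hs1nP22 hx0m hx0T
    have hxint : InterferesOn N Set.univ P22 N.s1 (Ps1v2[i]'(by omega)) :=
      ⟨trivial, hTi, ⟨Ps1v2[i+1], hTi1, trivial, PfAux.path_edge hPs1v2 hi⟩,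
        Ps1v2.take (i+1), hqpath, fun y _ => trivial, hqavoid⟩
    have hxv2 := huniq2 _ hxint
    -- v2 is the last element of Ps1v2, so index i = length - 1, contradiction
    have hlpos : 0 < Ps1v2.length := by omega
    have hv2last : Ps1v2[Ps1v2.length - 1]'(by omega) = v2 := PfAux.getLast_getElem hPs1v2 hlpos
    have := PfAux.path_getElem_inj hPs1v2 (i := i) (j := Ps1v2.length - 1) (by omega) (by omega)
      (by rw [hxv2, hv2last])
    omega
  -- v6 is not on P11
  have hv6nP11 : v6 ∉ P11 := by
    intro hmem
    have h1 := hv5last v6 hv6mem hmem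
    have h2 : Ps1v2.idxOf v6 = k+1 := by rw [← hgetk1]; exact PfAux.nodup_indexOf hndPs1v2 hklt1
    have h3 : Ps1v2.idxOf v5 = k := by rw [← hgetk]; exact PfAux.nodup_indexOf hndPs1v2 hklt
    omega
  have hv6nP22 : v6 ∉ P22 := hPs1v2nP22 v6 hv6mem
  have hv6Pvm : v6 ∈ Pvmv1 := by
    rcases hPs1v2sub v6 hv6mem with h|h|h
    · exact absurd h hv6nP11
    · exact absurd h hv6nP22
    · exact h
  -- indices on Pvmv1
  have hPvmne : Pvmv1 ≠ [] := hPvmv1.1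
  have hPvmpos : 0 < Pvmv1.length := List.length_pos_iff.mpr hPvmne
  have hvm0 : Pvmv1[0] = vm := PfAux.head_getElem hPvmv1 hPvmpos
  obtain ⟨i2, hi2lt, hi2get⟩ := PfAux.mem_idx hv2Pvmv1
  have hi2pos : 0 < i2 := by
    rcases Nat.eq_zero_or_pos i2 with h0|h0
    · exfalso; apply hv2ne; rw [← hi2get]
      have : Pvmv1[i2]'hi2lt = Pvmv1[0]'hPvmpos := by congr 1
      rw [this, hvm0]
    · exact h0
  obtain ⟨i6, hi6lt, hi6get⟩ := PfAux.mem_idx hv6Pvm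
  have hv6nevm : v6 ≠ vm := fun h => hv6nP22 (h ▸ hvmP22)
  have hi6pos : 0 < i6 := by
    rcases Nat.eq_zero_or_pos i6 with h0|h0
    · exfalso; apply hv6nevm; rw [← hi6get]
      have : Pvmv1[i6]'hi6lt = Pvmv1[0]'hPvmpos := by congr 1
      rw [this, hvm0]
    · exact h0
  -- layer facts
  have hlay_v6 : N.layer v6 = N.layer N.s1 + (k+1) := by
    rw [← hgetk1]; exact PfAux.path_layer hPs1v2 _ hklt1
  have hlay_v2s : N.layer v2 = N.layer N.s1 + (Ps1v2.length - 1) := by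
    have hlpos : 0 < Ps1v2.length := by omega
    have hv2last : Ps1v2[Ps1v2.length - 1]'(by omega) = v2 := PfAux.getLast_getElem hPs1v2 hlpos
    rw [← hv2last]; exact PfAux.path_layer hPs1v2 _ (by omega)
  have hv6lev2 : N.layer v6 ≤ N.layer v2 := by rw [hlay_v6, hlay_v2s]; omega
  have hlay_v6m : N.layer v6 = N.layer vm + i6 := by
    rw [← hi6get]; exact PfAux.path_layer hPvmv1 _ hi6lt
  have hlay_v2m : N.layer v2 = N.layer vm + i2 := by
    rw [← hi2get]; exact PfAux.path_layer hPvmv1 _ hi2lt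
  have hi6lei2 : i6 ≤ i2 := by omega
  -- Pvmv1 meets P22 only at vm
  have hPvmP22 : ∀ i, ∀ hi : i < Pvmv1.length, Pvmv1[i] ∈ P22 → i = 0 := by
    intro i hi hmem
    have hlen : Pvmv1.length ≤ Ps2v1.length := hPvmv1suffix.length_le
    obtain ⟨hj, hgeti⟩ := PfAux.suffix_getElem hPvmv1suffix hi
    obtain ⟨hj0, hgetvm'⟩ := PfAux.suffix_getElem hPvmv1suffix hPvmpos
    have hgetvm : Ps2v1[Ps2v1.length - Pvmv1.length + 0]'hj0 = vm := by rw [hgetvm', hvm0]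
    have h1 := hvmlast Pvmv1[i] (by rw [← hgeti]; exact PfAux.idx_mem _) hmem
    have h2 : Ps2v1.idxOf Pvmv1[i] = Ps2v1.length - Pvmv1.length + i := by
      rw [← hgeti]; exact PfAux.nodup_indexOf hndPs2v1 _
    have h3 : Ps2v1.idxOf vm = Ps2v1.length - Pvmv1.length + 0 := by
      rw [← hgetvm]; exact PfAux.nodup_indexOf hndPs2v1 _
    omega
  -- ========== construction of R2' ==========
  obtain ⟨im, himlt, himget⟩ := PfAux.mem_idx hvmP22
  obtain ⟨i0, hi0lt, hi0get⟩ := PfAux.mem_idx hv0P22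
  have hq1 : IsPath N.E (P22.take (im+1)) N.s2 vm := by
    have := PfAux.path_take hP22 himlt; rwa [himget] at this
  have hq2 : IsPath N.E (Pvmv1.take (i2+1)) vm v2 := by
    have := PfAux.path_take hPvmv1 hi2lt; rwa [hi2get] at this
  have hq12 : IsPath N.E (P22.take (im+1) ++ (Pvmv1.take (i2+1)).tail) N.s2 v2 :=
    PfAux.path_append_shared hq1 hq2
  have hq3 : IsPath N.E (P22.drop i0) v0 N.d2 := by
    have := PfAux.path_drop hP22 hi0lt; rwa [hi0get] at this
  have hR2path : IsPath N.E ((P22.take (im+1) ++ (Pvmv1.take (i2+1)).tail) ++ P22.drop i0)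
      N.s2 N.d2 := PfAux.path_append_edge hq12 hq3 hv2v0
  set R2' : List V := (P22.take (im+1) ++ (Pvmv1.take (i2+1)).tail) ++ P22.drop i0 with hR2def
  have hR2sub : ∀ x ∈ R2', x ∈ P22 ∨ x ∈ Pvmv1 := by
    intro x hx
    rw [hR2def] at hx
    rcases List.mem_append.mp hx with hx|hx
    · rcases List.mem_append.mp hx with hx|hx
      · exact Or.inl (List.mem_of_mem_take hx)
      · exact Or.inr (List.mem_of_mem_take (List.mem_of_mem_tail hx))
    · exact Or.inl (List.mem_of_mem_drop hx)
  have hR2nP11 : ∀ x ∈ P11, x ∉ R2' := by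
    intro x hx hmem
    rcases hR2sub _ hmem with h|h
    · exact hdisj hx h
    · exact hPvm_nP11 _ h hx
  have hv6R2 : v6 ∈ R2' := by
    rw [hR2def]
    refine List.mem_append.mpr (Or.inl (List.mem_append.mpr (Or.inr ?_)))
    have := PfAux.mem_tail_take (p := Pvmv1) hi6pos hi6lei2 hi2lt
    rwa [hi6get] at this
  -- ========== every path from s1 to d2 contains v5 ==========
  have hd2half : ∀ p : List V, IsPath N.E p N.s1 N.d2 → v5 ∈ p := by
    have hnm := hNoMan P11 R2' hP11 hR2path (fun a ha => hR2nP11 a ha)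
    have hcnt : nInterf N Set.univ R2' N.s1 = 1 := by
      by_contra hne
      exact hnm ⟨Set.univ, fun x _ => trivial, fun x _ => trivial, by omega, hne⟩
    obtain ⟨j5, hj5lt, hj5get⟩ := PfAux.mem_idx hv5P11
    have hv5int : InterferesOn N Set.univ R2' N.s1 v5 := by
      refine ⟨trivial, fun h => hR2nP11 v5 hv5P11 h, ⟨v6, hv6R2, trivial, hv5v6E⟩,
        P11.take (j5+1), ?_, fun x _ => trivial, ?_⟩
      · have := PfAux.path_take hP11 hj5lt; rwa [hj5get] at this
      · intro x hx; exact hR2nP11 x (List.mem_of_mem_take hx)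
    obtain ⟨a, ha⟩ := Set.ncard_eq_one.mp hcnt
    have hav5 : a = v5 := by
      have h2 : v5 ∈ ({a} : Set V) := by rw [← ha]; exact hv5int
      simpa using h2.symm
    rw [hav5] at ha
    intro p hp
    by_contra hv5np
    have hs1nR2 : N.s1 ∉ R2' := hR2nP11 N.s1 hs1P11
    have hd2R2 : N.d2 ∈ R2' := PfAux.mem_getLast hR2path
    obtain ⟨i, hi, hTi, hTi1, hqpath, hqavoid⟩ :=
      PfAux.first_entry (T := fun z => z ∈ R2') hp hs1nR2 (PfAux.mem_getLast hp) hd2R2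
    have hint : InterferesOn N Set.univ R2' N.s1 (p[i]'(by omega)) :=
      ⟨trivial, hTi, ⟨p[i+1], hTi1, trivial, PfAux.path_edge hp hi⟩,
        p.take (i+1), hqpath, fun x _ => trivial, hqavoid⟩
    have heq : p[i]'(by omega) = v5 := by
      have h2 : p[i]'(by omega) ∈ ({v5} : Set V) := by rw [← ha]; exact hint
      simpa using h2
    exact hv5np (heq ▸ PfAux.idx_mem (show i < p.length by omega))
  -- ========== every path from s1 to v2 contains v5 ==========
  have hM : ∀ q : List V, IsPath N.E q N.s1 v2 → v5 ∈ q := by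
    intro q hq
    have hpath := PfAux.path_append_edge hq hq3 hv2v0
    have hm := hd2half _ hpath
    rcases List.mem_append.mp hm with h|h
    · exact h
    · exact absurd (List.mem_of_mem_drop h) hv5nP22
  -- ========== every path from s1 to d1 contains v5 ==========
  have hd1half : ∀ p : List V, IsPath N.E p N.s1 N.d1 → v5 ∈ p := by
    intro P hP'
    by_contra hv5nP
    -- v2 is not on P
    have hav2 : v2 ∉ P := by
      intro hmem
      obtain ⟨ip, hiplt, hipget⟩ := PfAux.mem_idx hmem
      have hpre := PfAux.path_take hP' hiplt
      rw [hipget] at hpre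
      exact hv5nP (List.mem_of_mem_take (hM _ hpre))
    -- P avoids P22
    have hcP22 : ∀ x ∈ P, x ∉ P22 := by
      intro x hx hxP22
      obtain ⟨i, hi, hTi, hTi1, hqpath, hqavoid⟩ :=
        PfAux.first_entry (T := fun z => z ∈ P22) hP' hs1nP22 hx hxP22
      have hint : InterferesOn N Set.univ P22 N.s1 (P[i]'(by omega)) :=
        ⟨trivial, hTi, ⟨P[i+1], hTi1, trivial, PfAux.path_edge hP' hi⟩,
          P.take (i+1), hqpath, fun y _ => trivial, hqavoid⟩
      have heq := huniq2 _ hint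
      exact hav2 (heq ▸ PfAux.idx_mem (show i < P.length by omega))
    have hnmP := hNoMan P P22 hP' hP22 (fun a ha => hcP22 a ha)
    -- the generic fact : in any v5-free vertex set, nobody interferes on P22
    have hn2zero : ∀ S : Set V, v5 ∉ S → nInterf N S P22 N.s1 = 0 := by
      intro S hv5S
      rw [nInterf, Set.ncard_eq_zero (Set.toFinite _)]
      ext x
      simp only [Set.mem_setOf_eq, Set.mem_empty_iff_false, iff_false]
      intro hx
      have hxu := PfAux.interferes_mono (fun y _ => Set.mem_univ y) hx
      have hxv2 := huniq2 _ hxu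
      obtain ⟨-, -, -, q, hq, hqS, -⟩ := hx
      rw [hxv2] at hq
      exact hv5S (hqS _ (hM _ hq))
    -- the unique interferer xs ∈ P22 on P within P ∪ P22
    set S1 : Set V := {x | x ∈ P ∨ x ∈ P22} with hS1def
    have hv5nS1 : v5 ∉ S1 := by
      rintro (h|h)
      · exact hv5nP h
      · exact hv5nP22 h
    have hn1S1 : nInterf N S1 P N.s2 = 1 := by
      by_contra hne
      exact hnmP ⟨S1, fun x hx => Or.inl hx, fun x hx => Or.inr hx, hne,
        by rw [hn2zero S1 hv5nS1]; omega⟩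
    obtain ⟨xs, hxs⟩ := Set.ncard_eq_one.mp hn1S1
    have hxsint : InterferesOn N S1 P N.s2 xs := by
      have h2 : xs ∈ {v | InterferesOn N S1 P N.s2 v} := by rw [hxs]; rfl
      exact h2
    have hxsnP : xs ∉ P := hxsint.2.1
    have hxsP22 : xs ∈ P22 := by
      rcases hxsint.1 with h|h
      · exact absurd h hxsnP
      · exact h
    by_cases hPvmP : ∃ x ∈ Pvmv1, x ∈ P
    · -- Branch 1 : P meets Pvmv1
      have hexz : ∃ j, j < Pvmv1.length ∧ Pvmv1.getD j vm ∈ P := by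
        obtain ⟨x, hx1, hx2⟩ := hPvmP
        obtain ⟨j, hj, hg⟩ := PfAux.mem_idx hx1
        exact ⟨j, hj, by rw [List.getD_eq_getElem _ _ hj, hg]; exact hx2⟩
      set jz := Nat.find hexz with hjzdef
      obtain ⟨hjzlt, hjzmem⟩ := Nat.find_spec hexz
      have hjzget : Pvmv1[jz] ∈ P := by rwa [List.getD_eq_getElem _ _ hjzlt] at hjzmem
      have hmin : ∀ m, m < jz → ∀ hm : m < Pvmv1.length, Pvmv1[m] ∉ P := by
        intro m hm hmlt hmem
        exact Nat.find_min hexz hm ⟨hmlt, by rw [List.getD_eq_getElem _ _ hmlt]; exact hmem⟩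
      have hjzgt : i2 < jz := by
        by_contra hle
        push_neg at hle
        obtain ⟨ipz, hipzlt, hipzget⟩ := PfAux.mem_idx hjzget
        have hseg := PfAux.path_segment hPvmv1 hle hi2lt
        rw [hi2get] at hseg
        have hpre := PfAux.path_take hP' hipzlt
        rw [hipzget] at hpre
        have hcat := PfAux.path_append_shared hpre hseg
        have hv5in := hM _ hcat
        rcases List.mem_append.mp hv5in with h|h
        · exact hv5nP (List.mem_of_mem_take h)
        · exact hv5nPvm (List.mem_of_mem_drop (List.mem_of_mem_take (List.mem_of_mem_tail h)))
      have hz1lt : jz - 1 < Pvmv1.length := by omega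
      have hzmnP : Pvmv1[jz-1] ∉ P := hmin (jz-1) (by omega) hz1lt
      have hzmP22 : Pvmv1[jz-1] ∉ P22 := by
        intro hmem
        have := hPvmP22 (jz-1) hz1lt hmem
        omega
      have hzedge : N.E (Pvmv1[jz-1]'hz1lt) (Pvmv1[jz]'hjzlt) := by
        have h2 := PfAux.path_edge hPvmv1 (i := jz-1) (by omega)
        have h3 : Pvmv1[jz-1+1]'(by omega) = Pvmv1[jz]'hjzlt := by congr 1; omega
        rwa [h3] at h2
      have hq2z : IsPath N.E (Pvmv1.take (jz-1+1)) vm (Pvmv1[jz-1]'hz1lt) :=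
        PfAux.path_take hPvmv1 hz1lt
      have hqz := PfAux.path_append_shared hq1 hq2z
      set S9 : Set V := {x | x ∈ P ∨ x ∈ P22 ∨ x ∈ Pvmv1} with hS9def
      have hv5nS9 : v5 ∉ S9 := by
        rintro (h|h|h)
        · exact hv5nP h
        · exact hv5nP22 h
        · exact hv5nPvm h
      have hint_zm : InterferesOn N S9 P N.s2 (Pvmv1[jz-1]'hz1lt) := by
        refine ⟨Or.inr (Or.inr (PfAux.idx_mem hz1lt)), hzmnP,
          ⟨Pvmv1[jz]'hjzlt, hjzget, Or.inl hjzget, hzedge⟩,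
          P22.take (im+1) ++ (Pvmv1.take (jz-1+1)).tail, hqz, ?_, ?_⟩
        · intro x hx
          rcases List.mem_append.mp hx with h|h
          · exact Or.inr (Or.inl (List.mem_of_mem_take h))
          · exact Or.inr (Or.inr (List.mem_of_mem_take (List.mem_of_mem_tail h)))
        · intro x hx
          rcases List.mem_append.mp hx with h|h
          · exact fun hxP => hcP22 _ hxP (List.mem_of_mem_take h)
          · obtain ⟨m, hm, hmlt, hmg⟩ := PfAux.mem_take_idx (List.mem_of_mem_tail h)
            rw [← hmg]
            exact hmin m (by omega) hm
      have hint_xs : InterferesOn N S9 P N.s2 xs :=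
        PfAux.interferes_mono (by rintro y (h|h); exacts [Or.inl h, Or.inr (Or.inl h)]) hxsint
      have hne2 : (Pvmv1[jz-1]'hz1lt) ≠ xs := fun h => hzmP22 (h ▸ hxsP22)
      have h2le : 1 < nInterf N S9 P N.s2 :=
        (Set.one_lt_ncard (Set.toFinite _)).mpr ⟨_, hint_zm, _, hint_xs, hne2⟩
      exact hnmP ⟨S9, fun x hx => Or.inl hx, fun x hx => Or.inr (Or.inl hx), by omega,
        by rw [hn2zero S9 hv5nS9]; omega⟩
    · -- Branch 2 : P does not meet Pvmv1
      push_neg at hPvmP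
      obtain ⟨-, -, ⟨w, hwP11, -, hE1w⟩, -⟩ := hv1int
      obtain ⟨jw, hjwlt, hjwget⟩ := PfAux.mem_idx hwP11
      have hP11pos : 0 < P11.length := List.length_pos_iff.mpr hP11ne
      have hd1last : P11[P11.length - 1]'(by omega) = N.d1 := PfAux.getLast_getElem hP11 hP11pos
      have hexj : ∃ j, (jw ≤ j ∧ j < P11.length) ∧ P11.getD j v5 ∈ P := by
        refine ⟨P11.length - 1, ⟨by omega, by omega⟩, ?_⟩
        rw [List.getD_eq_getElem _ _ (by omega : P11.length - 1 < P11.length), hd1last]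
        exact PfAux.mem_getLast hP'
      set js := Nat.find hexj with hjsdef
      obtain ⟨⟨hjsge, hjslt⟩, hjsmem⟩ := Nat.find_spec hexj
      have hjsget : P11[js] ∈ P := by rwa [List.getD_eq_getElem _ _ hjslt] at hjsmem
      have hminj : ∀ m, jw ≤ m → m < js → ∀ hm : m < P11.length, P11[m] ∉ P := by
        intro m hge hlt hmlt hmem
        exact Nat.find_min hexj hlt ⟨⟨hge, hmlt⟩, by rw [List.getD_eq_getElem _ _ hmlt]; exact hmem⟩
      obtain ⟨j5, hj5lt, hj5get⟩ := PfAux.mem_idx hv5P11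
      have hlayv5 : N.layer v5 = N.layer N.s1 + j5 := by
        rw [← hj5get]; exact PfAux.path_layer hP11 _ hj5lt
      have hlayw : N.layer w = N.layer N.s1 + jw := by
        rw [← hjwget]; exact PfAux.path_layer hP11 _ hjwlt
      have hv1last : Pvmv1[Pvmv1.length - 1]'(by omega) = v1 := PfAux.getLast_getElem hPvmv1 hPvmpos
      have hlayv1 : N.layer v1 = N.layer vm + (Pvmv1.length - 1) := by
        rw [← hv1last]; exact PfAux.path_layer hPvmv1 _ (by omega)
      have hlayedge1 : N.layer v6 = N.layer v5 + 1 := N.edge_layer _ _ hv5v6E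
      have hlayedge2 : N.layer w = N.layer v1 + 1 := N.edge_layer _ _ hE1w
      have hj5jw : j5 < jw := by omega
      set Seg : Set V := {x | ∃ j, jw ≤ j ∧ j < js ∧ ∃ hj : j < P11.length, P11[j] = x} with hSegdef
      set S8 : Set V := {x | x ∈ P ∨ x ∈ P22 ∨ x ∈ Pvmv1 ∨ x ∈ Seg} with hS8def
      have hv5nS8 : v5 ∉ S8 := by
        rintro (h|h|h|⟨j, hj1, hj2, hj3, hj4⟩)
        · exact hv5nP h
        · exact hv5nP22 h
        · exact hv5nPvm h
        · have := PfAux.path_getElem_inj hP11 hj3 hj5lt (by rw [hj4, hj5get])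
          omega
      have hv1mem : v1 ∈ Pvmv1 := PfAux.mem_getLast hPvmv1
      have hqv1 : IsPath N.E (P22.take (im+1) ++ Pvmv1.tail) N.s2 v1 :=
        PfAux.path_append_shared hq1 hPvmv1
      have hsecond : ∃ u, InterferesOn N S8 P N.s2 u ∧ u ∉ P22 := by
        by_cases hjj : js = jw
        · have h4 : P11[js]'hjslt = w := by
            rw [← hjwget]; congr 1
          have hwP : w ∈ P := h4 ▸ hjsget
          refine ⟨v1, ⟨Or.inr (Or.inr (Or.inl hv1mem)), hPvmP v1 hv1mem,
            ⟨w, hwP, Or.inl hwP, hE1w⟩,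
            P22.take (im+1) ++ Pvmv1.tail, hqv1, ?_, ?_⟩, hv1P22⟩
          · intro x hx
            rcases List.mem_append.mp hx with h|h
            · exact Or.inr (Or.inl (List.mem_of_mem_take h))
            · exact Or.inr (Or.inr (Or.inl (List.mem_of_mem_tail h)))
          · intro x hx
            rcases List.mem_append.mp hx with h|h
            · exact fun hxP => hcP22 _ hxP (List.mem_of_mem_take h)
            · exact hPvmP x (List.mem_of_mem_tail h)
        · have hjsgt : jw < js := by omega
          have hjs1lt : js - 1 < P11.length := by omega
          have hseg : IsPath N.E ((P11.drop jw).take (js - 1 - jw + 1)) w (P11[js-1]'hjs1lt) := by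
            have := PfAux.path_segment hP11 (show jw ≤ js - 1 by omega) hjs1lt
            rwa [hjwget] at this
          have hqu := PfAux.path_append_edge hqv1 hseg hE1w
          have huNP : P11[js-1]'hjs1lt ∉ P := hminj (js-1) (by omega) (by omega) hjs1lt
          have huedge : N.E (P11[js-1]'hjs1lt) (P11[js]'hjslt) := by
            have h2 := PfAux.path_edge hP11 (i := js-1) (by omega)
            have h3 : P11[js-1+1]'(by omega) = P11[js]'hjslt := by congr 1; omega
            rwa [h3] at h2
          refine ⟨P11[js-1]'hjs1lt, ⟨Or.inr (Or.inr (Or.inr ⟨js-1, by omega, by omega, hjs1lt, rfl⟩)),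
            huNP, ⟨P11[js]'hjslt, hjsget, Or.inl hjsget, huedge⟩,
            (P22.take (im+1) ++ Pvmv1.tail) ++ (P11.drop jw).take (js - 1 - jw + 1), hqu, ?_, ?_⟩,
            fun hc => hdisj (PfAux.idx_mem hjs1lt) hc⟩
          · intro x hx
            rcases List.mem_append.mp hx with h|h
            · rcases List.mem_append.mp h with h2|h2
              · exact Or.inr (Or.inl (List.mem_of_mem_take h2))
              · exact Or.inr (Or.inr (Or.inl (List.mem_of_mem_tail h2)))
            · obtain ⟨m, hm, hmlt, hmg⟩ := PfAux.mem_seg_idx h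
              exact Or.inr (Or.inr (Or.inr ⟨jw + m, by omega, by omega, hm, hmg⟩))
          · intro x hx
            rcases List.mem_append.mp hx with h|h
            · rcases List.mem_append.mp h with h2|h2
              · exact fun hxP => hcP22 _ hxP (List.mem_of_mem_take h2)
              · exact hPvmP x (List.mem_of_mem_tail h2)
            · obtain ⟨m, hm, hmlt, hmg⟩ := PfAux.mem_seg_idx h
              rw [← hmg]
              exact hminj (jw+m) (by omega) (by omega) hm
      obtain ⟨u, hint_u, hunP22⟩ := hsecond
      have hint_xs : InterferesOn N S8 P N.s2 xs :=
        PfAux.interferes_mono (by rintro y (h|h); exacts [Or.inl h, Or.inr (Or.inl h)]) hxsint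
      have hne2 : u ≠ xs := fun h => hunP22 (h ▸ hxsP22)
      have h2le : 1 < nInterf N S8 P N.s2 :=
        (Set.one_lt_ncard (Set.toFinite _)).mpr ⟨_, hint_u, _, hint_xs, hne2⟩
      exact hnmP ⟨S8, fun x hx => Or.inl hx, fun x hx => Or.inr (Or.inl hx), by omega,
        by rw [hn2zero S8 hv5nS8]; omega⟩

  exact ⟨hd1half, hd2half⟩
end
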